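/- arXiv:2002.11384 — 6 statements merged into one kernel-verified Lean document; each statement's English description precedes it below -/
import Mathlib

section
/- Let (X, d) be a metric space, let φ : ℝ → ℝ → X → X (written φ(t; t₀, x₀)) be a time-varying flow on X with equilibrium point x⋆, and let D be an open ball of radius r > 0 centered at x⋆. Suppose V : ℝ × X → ℝ is continuous, W₁(d(x, x⋆)) ≤ V(t, x) ≤ W₂(d(x, x⋆)) for all t ≥ 0 and x ∈ D, where W₁, W₂ are class 𝒦 functions, and suppose that for every t₀ ≥ 0 and x₀ ∈ D, the function t ↦ V(t, φ(t; t₀, x₀)) is nonincreasing on any interval [t₀, T] on which the trajectory remains in D. Then x⋆ is uniformly stable: there exist a class 𝒦 function α and a constant c > 0, independent of t₀, such that d(φ(t; t₀, x₀), x⋆) ≤ α(d(x₀, x⋆)) for all t ≥ t₀ ≥ 0 and all x₀ with d(x₀, x⋆) < c. -/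
/-- A class 𝒦 function: continuous, strictly increasing on `[0, ∞)`,
vanishing at `0`, and nonnegative on `[0, ∞)`. -/
def IsClassK (α : ℝ → ℝ) : Prop :=
  ContinuousOn α (Set.Ici 0) ∧ StrictMonoOn α (Set.Ici 0) ∧ α 0 = 0 ∧
    ∀ r, 0 ≤ r → 0 ≤ α r

/-- A class 𝒦𝓛 function: continuous on `[0,∞) × [0,∞)`, class 𝒦 in the first
argument for each fixed second argument, and decreasing to `0` in the second
argument for each fixed first argument. -/
def IsClassKL (β : ℝ → ℝ → ℝ) : Prop :=
  ContinuousOn (Function.uncurry β) (Set.Ici 0 ×ˢ Set.Ici 0) ∧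
  (∀ s, 0 ≤ s → IsClassK fun r => β r s) ∧
  (∀ r, 0 ≤ r → AntitoneOn (fun s => β r s) (Set.Ici 0) ∧
    Filter.Tendsto (fun s => β r s) Filter.atTop (nhds 0))

/-- A time-varying flow `φ t t₀ x₀ = φ(t; t₀, x₀)` on a metric space:
initial condition, semigroup property, and continuity in time. -/
def IsFlow {X : Type*} [MetricSpace X] (φ : ℝ → ℝ → X → X) : Prop :=
  (∀ t₀ x₀, φ t₀ t₀ x₀ = x₀) ∧
  (∀ t s t₀ x₀, t₀ ≤ s → s ≤ t → φ t s (φ s t₀ x₀) = φ t t₀ x₀) ∧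
  (∀ t₀ x₀, Continuous fun t => φ t t₀ x₀)

/-- `xs` is an equilibrium point of the flow `φ`: `φ(t; t₀, x⋆) = x⋆` for all
`t ≥ t₀ ≥ 0`. -/
def IsEquilibrium {X : Type*} [MetricSpace X] (φ : ℝ → ℝ → X → X) (xs : X) : Prop :=
  ∀ t₀ t, 0 ≤ t₀ → t₀ ≤ t → φ t t₀ xs = xs

/-- A continuous monotone "inverse" of a class 𝒦 function on `[0, W ρ]`. -/
lemma classK_inverse (W : ℝ → ℝ) (hW : IsClassK W) (ρ : ℝ) (hρ : 0 < ρ) :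
    ∃ g : ℝ → ℝ, Continuous g ∧ Monotone g ∧ g 0 = 0 ∧
      (∀ y, g y ∈ Set.Icc 0 ρ) ∧ (∀ y ∈ Set.Icc 0 (W ρ), W (g y) = y) := by
  obtain ⟨hcont, hmono, h0, hnn⟩ := hW
  have hρ0 : (0:ℝ) ≤ ρ := hρ.le
  have hWρ : (0:ℝ) ≤ W ρ := hnn ρ hρ0
  have hsub : Set.Icc (0:ℝ) ρ ⊆ Set.Ici 0 := Set.Icc_subset_Ici_self
  have hmem : ∀ x : Set.Icc (0:ℝ) ρ, W x ∈ Set.Icc 0 (W ρ) := by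
    rintro ⟨x, hx0, hxρ⟩
    exact ⟨hnn x hx0, hmono.monotoneOn hx0 (Set.mem_Ici.2 hρ0) hxρ⟩
  set F : Set.Icc (0:ℝ) ρ → Set.Icc (0:ℝ) (W ρ) := fun x => ⟨W x, hmem x⟩ with hF
  have hFbij : Function.Bijective F := by
    constructor
    · rintro a b hab
      have : W a = W b := congrArg Subtype.val hab
      exact Subtype.ext (hmono.injOn (hsub a.2) (hsub b.2) this)
    · rintro ⟨y, hy⟩
      have hy' : y ∈ Set.Icc (W 0) (W ρ) := by rwa [h0]
      obtain ⟨x, hx, hWx⟩ := intermediate_value_Icc hρ0 (hcont.mono hsub) hy'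
      exact ⟨⟨x, hx⟩, Subtype.ext hWx⟩
  set e : Set.Icc (0:ℝ) ρ ≃ Set.Icc (0:ℝ) (W ρ) := Equiv.ofBijective F hFbij with he
  have hFcont : Continuous F := by
    apply Continuous.subtype_mk
    exact hcont.comp_continuous continuous_subtype_val (fun x => hsub x.2)
  have hecont : Continuous e := hFcont
  set h : Set.Icc (0:ℝ) ρ ≃ₜ Set.Icc (0:ℝ) (W ρ) := hecont.homeoOfEquivCompactToT2 with hh
  set g : ℝ → ℝ := fun y => ((h.symm (Set.projIcc 0 (W ρ) hWρ y)) : ℝ) with hg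
  have happ : ∀ x, (h x : ℝ) = W x := fun x => rfl
  have hkey : ∀ y, W (g y) = ((Set.projIcc 0 (W ρ) hWρ y : Set.Icc (0:ℝ) (W ρ)) : ℝ) := by
    intro y
    have := h.apply_symm_apply (Set.projIcc 0 (W ρ) hWρ y)
    calc W (g y) = (h (h.symm (Set.projIcc 0 (W ρ) hWρ y)) : ℝ) := rfl
      _ = _ := by rw [this]
  refine ⟨g, ?_, ?_, ?_, ?_, ?_⟩
  · exact continuous_subtype_val.comp (h.symm.continuous.comp continuous_projIcc)
  · intro y₁ y₂ hy
    have h1 : W (g y₁) ≤ W (g y₂) := by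
      rw [hkey, hkey]
      exact_mod_cast Set.monotone_projIcc hWρ hy
    by_contra hc
    push_neg at hc
    exact absurd h1 (not_le.2 (hmono (hsub (h.symm _).2) (hsub (h.symm _).2) hc))
  · have h1 : W (g 0) = 0 := by
      rw [hkey]
      rw [Set.projIcc_of_mem hWρ ⟨le_refl 0, hWρ⟩]
    have h2 : W (g 0) = W 0 := by rw [h1, h0]
    exact hmono.injOn (hsub (h.symm _).2) (Set.mem_Ici.2 le_rfl) h2
  · intro y; exact (h.symm _).2
  · intro y hy
    rw [hkey, Set.projIcc_of_mem hWρ hy]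

/-- Direct Lyapunov theorem for uniform stability on a metric space.
If a continuous Lyapunov candidate `V` is sandwiched between class 𝒦 functions of
the distance to the equilibrium on an open ball `D` of radius `r` about `x⋆`, and
`t ↦ V(t, φ(t; t₀, x₀))` is nonincreasing on every interval on which the trajectory
stays in `D`, then `x⋆` is uniformly stable. -/
theorem uniform_stability_of_lyapunov
    {X : Type*} [MetricSpace X]
    (φ : ℝ → ℝ → X → X) (xs : X)
    (hflow : IsFlow φ) (heq : IsEquilibrium φ xs)
    (r : ℝ) (hr : 0 < r)
    (V : ℝ → X → ℝ)
    (hVcont : Continuous fun p : ℝ × X => V p.1 p.2)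
    (W₁ W₂ : ℝ → ℝ) (hW₁ : IsClassK W₁) (hW₂ : IsClassK W₂)
    (hbound : ∀ t, 0 ≤ t → ∀ x ∈ Metric.ball xs r,
      W₁ (dist x xs) ≤ V t x ∧ V t x ≤ W₂ (dist x xs))
    (hdecr : ∀ t₀, 0 ≤ t₀ → ∀ x₀ ∈ Metric.ball xs r, ∀ T, t₀ ≤ T →
      (∀ τ ∈ Set.Icc t₀ T, φ τ t₀ x₀ ∈ Metric.ball xs r) →
      AntitoneOn (fun t => V t (φ t t₀ x₀)) (Set.Icc t₀ T)) :
    ∃ (α : ℝ → ℝ) (c : ℝ), IsClassK α ∧ 0 < c ∧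
      ∀ t₀ t x₀, 0 ≤ t₀ → t₀ ≤ t → dist x₀ xs < c →
        dist (φ t t₀ x₀) xs ≤ α (dist x₀ xs) := by
  obtain ⟨hinit, hsemi, hcont_t⟩ := hflow
  set ρ := r / 2 with hρdef
  have hρ : 0 < ρ := by positivity
  have hρr : ρ < r := by rw [hρdef]; linarith
  obtain ⟨g, hgc, hgm, hg0, hgmem, hginv⟩ := classK_inverse W₁ hW₁ ρ hρ
  obtain ⟨hW₁c, hW₁m, hW₁0, hW₁nn⟩ := hW₁
  obtain ⟨hW₂c, hW₂m, hW₂0, hW₂nn⟩ := hW₂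
  have hb : 0 < W₁ ρ := by
    have := hW₁m (Set.mem_Ici.2 le_rfl) (Set.mem_Ici.2 hρ.le) hρ
    rwa [hW₁0] at this
  -- choose δ with W₂ s < W₁ ρ for 0 ≤ s < δ
  have hcw : ContinuousWithinAt W₂ (Set.Ici 0) 0 := hW₂c 0 (Set.mem_Ici.2 le_rfl)
  have hev : ∀ᶠ s in nhdsWithin 0 (Set.Ici 0), W₂ s < W₁ ρ := by
    apply hcw.eventually_lt continuousWithinAt_const
    rwa [hW₂0]
  obtain ⟨δ, hδ0, hδ⟩ := Metric.mem_nhdsWithin_iff.1 hev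
  set c := min δ ρ with hc
  have hc0 : 0 < c := lt_min hδ0 hρ
  have hcρ : c ≤ ρ := min_le_right _ _
  have hcδ : c ≤ δ := min_le_left _ _
  have hW₂small : ∀ s, 0 ≤ s → s < c → W₂ s < W₁ ρ := by
    intro s hs hsc
    refine hδ ⟨Metric.mem_ball.2 ?_, Set.mem_Ici.2 hs⟩
    rw [Real.dist_eq, sub_zero, abs_of_nonneg hs]
    exact lt_of_lt_of_le hsc hcδ
  -- invariance: trajectories starting in ball c stay in ball ρ
  have key : ∀ t₀ x₀, 0 ≤ t₀ → dist x₀ xs < c → ∀ t, t₀ ≤ t →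
      dist (φ t t₀ x₀) xs < ρ := by
    intro t₀ x₀ ht₀ hx₀ t ht
    set f : ℝ → ℝ := fun τ => dist (φ τ t₀ x₀) xs with hf
    have hfc : Continuous f := (hcont_t t₀ x₀).dist continuous_const
    have hft₀ : f t₀ < ρ := by
      show dist (φ t₀ t₀ x₀) xs < ρ
      rw [hinit]
      exact lt_of_lt_of_le hx₀ hcρ
    by_contra hcon
    push_neg at hcon
    set S := {τ | t₀ ≤ τ} ∩ {τ | ρ ≤ f τ} with hS
    have hSne : S.Nonempty := ⟨t, ht, hcon⟩
    have hSbdd : BddBelow S := ⟨t₀, fun x hx => hx.1⟩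
    have hScl : IsClosed S :=
      (isClosed_le continuous_const continuous_id).inter (isClosed_le continuous_const hfc)
    set T := sInf S with hT
    have hTS : T ∈ S := hScl.csInf_mem hSne hSbdd
    have hTt₀ : t₀ ≤ T := hTS.1
    have hTρ : ρ ≤ f T := hTS.2
    have hlt : ∀ τ, t₀ ≤ τ → τ < T → f τ < ρ := by
      intro τ h1 h2
      by_contra hc'
      push_neg at hc'
      exact absurd (csInf_le hSbdd ⟨h1, hc'⟩) (not_le.2 h2)
    have hTne : t₀ < T := by
      rcases lt_or_eq_of_le hTt₀ with h | h
      · exact h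
      · rw [← h] at hTρ; exact absurd hTρ (not_le.2 hft₀)
    have hfT : f T ≤ ρ := by
      have htend : Filter.Tendsto f (nhdsWithin T (Set.Iio T)) (nhds (f T)) :=
        (hfc.continuousAt.mono_left nhdsWithin_le_nhds)
      refine le_of_tendsto htend ?_
      filter_upwards [Ioo_mem_nhdsLT_of_mem (⟨hTne, le_rfl⟩ : T ∈ Set.Ioc t₀ T)] with τ hτ
      exact (hlt τ hτ.1.le hτ.2).le
    have hfTeq : f T = ρ := le_antisymm hfT hTρ
    have hball : x₀ ∈ Metric.ball xs r :=
      Metric.mem_ball.2 (lt_trans (lt_of_lt_of_le hx₀ hcρ) hρr)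
    have hin : ∀ τ ∈ Set.Icc t₀ T, φ τ t₀ x₀ ∈ Metric.ball xs r := by
      rintro τ ⟨h1, h2⟩
      rcases lt_or_eq_of_le h2 with h | h
      · exact Metric.mem_ball.2 (lt_trans (hlt τ h1 h) hρr)
      · rw [h]; exact Metric.mem_ball.2 (by rw [show dist (φ T t₀ x₀) xs = f T from rfl, hfTeq]; exact hρr)
    have hA := hdecr t₀ ht₀ x₀ hball T hTt₀ hin
    have hVle : V T (φ T t₀ x₀) ≤ V t₀ (φ t₀ t₀ x₀) :=
      hA ⟨le_rfl, hTt₀⟩ ⟨hTt₀, le_rfl⟩ hTt₀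
    rw [hinit] at hVle
    have h0T : (0:ℝ) ≤ T := le_trans ht₀ hTt₀
    have h1 : W₁ ρ ≤ V T (φ T t₀ x₀) := by
      have := (hbound T h0T _ (hin T ⟨hTt₀, le_rfl⟩)).1
      rwa [show dist (φ T t₀ x₀) xs = f T from rfl, hfTeq] at this
    have h2 : V t₀ x₀ ≤ W₂ (dist x₀ xs) := (hbound t₀ ht₀ x₀ hball).2
    have h3 : W₂ (dist x₀ xs) < W₁ ρ := hW₂small _ dist_nonneg hx₀
    linarith
  -- the class K function
  refine ⟨fun s => g (W₂ s) + s, c, ⟨?_, ?_, ?_, ?_⟩, hc0, ?_⟩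
  · exact ((hgc.comp_continuousOn hW₂c).add continuousOn_id)
  · intro a ha b hb hab
    have h1 : g (W₂ a) ≤ g (W₂ b) := hgm (hW₂m.monotoneOn ha hb hab.le)
    simpa using add_lt_add_of_le_of_lt h1 hab
  · simp only [hW₂0, hg0, add_zero]
  · intro s hs
    have := (hgmem (W₂ s)).1
    show 0 ≤ g (W₂ s) + s
    linarith
  · intro t₀ t x₀ ht₀ htt hx₀
    have hρtraj : ∀ τ, t₀ ≤ τ → dist (φ τ t₀ x₀) xs < ρ := key t₀ x₀ ht₀ hx₀
    have hball : x₀ ∈ Metric.ball xs r :=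
      Metric.mem_ball.2 (lt_trans (lt_of_lt_of_le hx₀ hcρ) hρr)
    have hin : ∀ τ ∈ Set.Icc t₀ t, φ τ t₀ x₀ ∈ Metric.ball xs r := fun τ hτ =>
      Metric.mem_ball.2 (lt_trans (hρtraj τ hτ.1) hρr)
    have hA := hdecr t₀ ht₀ x₀ hball t htt hin
    have hVle : V t (φ t t₀ x₀) ≤ V t₀ (φ t₀ t₀ x₀) :=
      hA ⟨le_rfl, htt⟩ ⟨htt, le_rfl⟩ htt
    rw [hinit] at hVle
    have h0t : (0:ℝ) ≤ t := le_trans ht₀ htt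
    have h1 : W₁ (dist (φ t t₀ x₀) xs) ≤ V t (φ t t₀ x₀) :=
      (hbound t h0t _ (hin t ⟨htt, le_rfl⟩)).1
    have h2 : V t₀ x₀ ≤ W₂ (dist x₀ xs) := (hbound t₀ ht₀ x₀ hball).2
    set y := W₂ (dist x₀ xs) with hy
    have hy0 : 0 ≤ y := hW₂nn _ dist_nonneg
    have hyb : y ≤ W₁ ρ := (hW₂small _ dist_nonneg hx₀).le
    have hWgy : W₁ (g y) = y := hginv y ⟨hy0, hyb⟩
    have hle : W₁ (dist (φ t t₀ x₀) xs) ≤ W₁ (g y) := by rw [hWgy]; linarith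
    have hfg : dist (φ t t₀ x₀) xs ≤ g y := by
      by_contra hc'
      push_neg at hc'
      exact absurd hle (not_le.2 (hW₁m (Set.mem_Ici.2 (hgmem y).1)
        (Set.mem_Ici.2 dist_nonneg) hc'))
    have hd := dist_nonneg (x := x₀) (y := xs)
    show dist (φ t t₀ x₀) xs ≤ g (W₂ (dist x₀ xs)) + dist x₀ xs
    linarith
end

section
/- Let (X, d) be a metric space, let φ be a time-varying flow on X with equilibrium point x⋆, and let D be an open ball of radius r > 0 centered at x⋆. Suppose V : ℝ × X → ℝ is continuous, W₁(d(x, x⋆)) ≤ V(t, x) ≤ W₂(d(x, x⋆)) for all t ≥ 0 and x ∈ D with W₁, W₂, W₃ class 𝒦 functions, and suppose that for every t₀ ≥ 0 and x₀ ∈ D, the function v(t) = V(t, φ(t; t₀, x₀)) is differentiable with v′(t) ≤ −W₃(d(φ(t; t₀, x₀), x⋆)) on any interval on which the trajectory remains in D. Then x⋆ is uniformly asymptotically stable: there exist a class 𝒦𝓛 function β and a constant c > 0, independent of t₀, such that d(φ(t; t₀, x₀), x⋆) ≤ β(d(x₀, x⋆), t − t₀) for all t ≥ t₀ ≥ 0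 and all x₀ with d(x₀, x⋆) < c. -/
open Set Filter MeasureTheory intervalIntegral

lemma auxKL_min_le_sqrt {a b : ℝ} (ha : 0 ≤ a) (hb : 0 ≤ b) :
    min a b ≤ Real.sqrt (a * b) := by
  rcases le_total a b with h | h
  · rw [min_eq_left h]
    calc a = Real.sqrt (a * a) := (Real.sqrt_mul_self ha).symm
    _ ≤ Real.sqrt (a * b) := Real.sqrt_le_sqrt (by nlinarith)
  · rw [min_eq_right h]
    calc b = Real.sqrt (b * b) := (Real.sqrt_mul_self hb).symm
    _ ≤ Real.sqrt (a * b) := Real.sqrt_le_sqrt (by nlinarith)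

lemma auxKL_antitoneOn {f : ℝ → ℝ} {a b : ℝ}
    (h : ∀ t ∈ Set.Icc a b, ∃ f', HasDerivAt f f' t ∧ f' ≤ 0) :
    AntitoneOn f (Set.Icc a b) := by
  apply antitoneOn_of_deriv_nonpos (convex_Icc a b)
  · intro t ht
    obtain ⟨f', hd, _⟩ := h t ht
    exact hd.continuousAt.continuousWithinAt
  · intro t ht
    obtain ⟨f', hd, _⟩ := h t (interior_subset ht)
    exact hd.differentiableAt.differentiableWithinAt
  · intro t ht
    obtain ⟨f', hd, hle⟩ := h t (interior_subset ht)
    rw [hd.deriv]; exact hle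

lemma auxKL_pos {α : ℝ → ℝ} (h : IsClassK α) {x : ℝ} (hx : 0 < x) : 0 < α x := by
  have := h.2.1 (Set.self_mem_Ici) (Set.mem_Ici.mpr hx.le) hx
  rwa [h.2.2.1] at this

lemma auxKL_le_of_le {α : ℝ → ℝ} (h : IsClassK α) {x y : ℝ} (hx : 0 ≤ x) (hy : 0 ≤ y)
    (hxy : α x ≤ α y) : x ≤ y := by
  by_contra hc
  push_neg at hc
  exact absurd (h.2.1 hy hx hc) (not_lt.mpr hxy)

lemma auxKL_exists_small {α : ℝ → ℝ} (h : IsClassK α) {ε : ℝ} (hε : 0 < ε) :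
    ∃ δ > 0, α δ < ε := by
  have hc : ContinuousWithinAt α (Set.Ici 0) 0 := h.1 0 Set.self_mem_Ici
  have h0 : Filter.Tendsto α (nhdsWithin 0 (Set.Ici 0)) (nhds 0) := by
    have := hc.tendsto; rwa [h.2.2.1] at this
  have hmem : α ⁻¹' (Set.Iio ε) ∈ nhdsWithin 0 (Set.Ici 0) := h0 (Iio_mem_nhds hε)
  rw [Metric.mem_nhdsWithin_iff] at hmem
  obtain ⟨η, hη, hsub⟩ := hmem
  refine ⟨η / 2, by linarith, ?_⟩
  apply hsub
  constructor
  · simp only [Metric.mem_ball, Real.dist_eq, sub_zero]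
    rw [abs_of_nonneg (by linarith : (0:ℝ) ≤ η/2)]; linarith
  · exact Set.mem_Ici.mpr (by linarith)

/-- Direct Lyapunov theorem for uniform asymptotic stability on a
metric space. If the Lyapunov candidate is sandwiched between class 𝒦 functions
of the distance to the equilibrium on a ball `D` about `x⋆`, and along every
trajectory remaining in `D` the function `v(t) = V(t, φ(t; t₀, x₀))` is
differentiable with `v′(t) ≤ −W₃(d(φ(t; t₀, x₀), x⋆))`, then `x⋆` is uniformly
asymptotically stable. -/
theorem uniform_asymptotic_stability_of_lyapunov
    {X : Type*} [MetricSpace X]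
    (φ : ℝ → ℝ → X → X) (xs : X)
    (hflow : IsFlow φ) (heq : IsEquilibrium φ xs)
    (r : ℝ) (hr : 0 < r)
    (V : ℝ → X → ℝ)
    (hVcont : Continuous fun p : ℝ × X => V p.1 p.2)
    (W₁ W₂ W₃ : ℝ → ℝ) (hW₁ : IsClassK W₁) (hW₂ : IsClassK W₂) (hW₃ : IsClassK W₃)
    (hbound : ∀ t, 0 ≤ t → ∀ x ∈ Metric.ball xs r,
      W₁ (dist x xs) ≤ V t x ∧ V t x ≤ W₂ (dist x xs))
    (hdecr : ∀ t₀, 0 ≤ t₀ → ∀ x₀ ∈ Metric.ball xs r, ∀ T, t₀ ≤ T →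
      (∀ τ ∈ Set.Icc t₀ T, φ τ t₀ x₀ ∈ Metric.ball xs r) →
      ∀ t ∈ Set.Icc t₀ T, ∃ v' : ℝ,
        HasDerivAt (fun s => V s (φ s t₀ x₀)) v' t ∧
        v' ≤ -W₃ (dist (φ t t₀ x₀) xs)) :
    ∃ (β : ℝ → ℝ → ℝ) (c : ℝ), IsClassKL β ∧ 0 < c ∧
      ∀ t₀ t x₀, 0 ≤ t₀ → t₀ ≤ t → dist x₀ xs < c →
        dist (φ t t₀ x₀) xs ≤ β (dist x₀ xs) (t - t₀) := by
  obtain ⟨hinit, hsemi, hcont⟩ := hflow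
  set ρ : ℝ := r / 2 with hρdef
  have hρ : 0 < ρ := by positivity
  have hρr : ρ < r := by rw [hρdef]; linarith
  obtain ⟨c₁, hc₁, hc₁W⟩ := auxKL_exists_small hW₂ (auxKL_pos hW₁ hρ)
  set c : ℝ := min c₁ ρ with hcdef
  have hc : 0 < c := lt_min hc₁ hρ
  have hcρ : c ≤ ρ := min_le_right _ _
  have hWc : W₂ c < W₁ ρ :=
    lt_of_le_of_lt (hW₂.2.1.monotoneOn (Set.mem_Ici.mpr hc.le)
      (Set.mem_Ici.mpr hc₁.le) (min_le_left _ _)) hc₁W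
  have hgcont : ∀ t₀ x₀, Continuous fun τ => dist (φ τ t₀ x₀) xs :=
    fun t₀ x₀ => (hcont t₀ x₀).dist continuous_const
  -- Key Lemma A : trajectories starting in ball c stay in ball ρ
  have keyA : ∀ t₀ x₀, 0 ≤ t₀ → dist x₀ xs < c → ∀ t, t₀ ≤ t →
      dist (φ t t₀ x₀) xs < ρ := by
    intro t₀ x₀ ht₀ hx₀ t ht
    by_contra hcon
    push_neg at hcon
    set g : ℝ → ℝ := fun τ => dist (φ τ t₀ x₀) xs with hgdef
    have hg : Continuous g := hgcont t₀ x₀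
    have hgt₀ : g t₀ < c := by
      have : g t₀ = dist x₀ xs := by rw [hgdef]; simp only; rw [hinit]
      rw [this]; exact hx₀
    set B : Set ℝ := Set.Icc t₀ t ∩ g ⁻¹' (Set.Ici ρ) with hBdef
    have hBne : B.Nonempty := ⟨t, ⟨ht, le_refl t⟩, hcon⟩
    have hBc : IsClosed B := isClosed_Icc.inter (isClosed_Ici.preimage hg)
    have hBbdd : BddBelow B := ⟨t₀, fun τ hτ => hτ.1.1⟩
    set T := sInf B with hTdef
    have hTB : T ∈ B := hBc.csInf_mem hBne hBbdd
    obtain ⟨⟨hTt₀, hTt⟩, hTρ'⟩ := hTB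
    have hTρ : ρ ≤ g T := hTρ'
    have ht₀T : t₀ < T := by
      rcases eq_or_lt_of_le hTt₀ with h | h
      · exfalso; rw [← h] at hTρ; linarith [hgt₀, hcρ]
      · exact h
    have hlt : ∀ τ ∈ Set.Ico t₀ T, g τ < ρ := by
      intro τ hτ
      by_contra hge
      push_neg at hge
      have hmem : τ ∈ B := ⟨⟨hτ.1, hτ.2.le.trans hTt⟩, hge⟩
      exact absurd (csInf_le hBbdd hmem) (not_le.mpr hτ.2)
    have hgT_le : g T ≤ ρ := by
      have hmem : Set.Ioo t₀ T ∈ nhdsWithin T (Set.Iio T) :=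
        Ioo_mem_nhdsLT_of_mem ⟨ht₀T, le_refl T⟩
      refine le_of_tendsto (hg.continuousAt.tendsto.mono_left (nhdsWithin_le_nhds (s := Set.Iio T))) ?_
      filter_upwards [hmem] with τ hτ
      exact (hlt τ ⟨hτ.1.le, hτ.2⟩).le
    have hgIcc : ∀ τ ∈ Set.Icc t₀ T, g τ ≤ ρ := by
      intro τ hτ
      rcases eq_or_lt_of_le hτ.2 with h | h
      · rw [h]; exact hgT_le
      · exact (hlt τ ⟨hτ.1, h⟩).le
    have hball : x₀ ∈ Metric.ball xs r :=
      Metric.mem_ball.mpr (hx₀.trans_le (hcρ.trans hρr.le))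
    have hballs : ∀ τ ∈ Set.Icc t₀ T, φ τ t₀ x₀ ∈ Metric.ball xs r := fun τ hτ =>
      Metric.mem_ball.mpr (lt_of_le_of_lt (hgIcc τ hτ) hρr)
    have hv := hdecr t₀ ht₀ x₀ hball T hTt₀ hballs
    have hanti : AntitoneOn (fun s => V s (φ s t₀ x₀)) (Set.Icc t₀ T) := by
      apply auxKL_antitoneOn
      intro tt htt
      obtain ⟨v', h1, h2⟩ := hv tt htt
      exact ⟨v', h1, h2.trans (neg_nonpos.mpr (hW₃.2.2.2 _ dist_nonneg))⟩
    have hVT : V T (φ T t₀ x₀) ≤ V t₀ x₀ := by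
      have := hanti ⟨le_refl t₀, hTt₀⟩ ⟨hTt₀, le_refl T⟩ hTt₀
      simpa [hinit] using this
    have hgTρ : g T = ρ := le_antisymm hgT_le hTρ
    have h1 : W₁ ρ ≤ V T (φ T t₀ x₀) := by
      have := (hbound T (ht₀.trans hTt₀) _ (hballs T ⟨hTt₀, le_refl T⟩)).1
      rwa [show dist (φ T t₀ x₀) xs = ρ from hgTρ] at this
    have h2 : V t₀ x₀ ≤ W₂ (dist x₀ xs) := (hbound t₀ ht₀ x₀ hball).2
    have h3 : W₂ (dist x₀ xs) < W₂ c :=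
      hW₂.2.1 (Set.mem_Ici.mpr dist_nonneg) (Set.mem_Ici.mpr hc.le) hx₀
    linarith
  -- Key Lemma : V is antitone along trajectories
  have keyV : ∀ t₀ x₀, 0 ≤ t₀ → dist x₀ xs < c → ∀ T, t₀ ≤ T →
      AntitoneOn (fun s => V s (φ s t₀ x₀)) (Set.Icc t₀ T) := by
    intro t₀ x₀ ht₀ hx₀ T hT
    have hball : x₀ ∈ Metric.ball xs r :=
      Metric.mem_ball.mpr (hx₀.trans_le (hcρ.trans hρr.le))
    have hballs : ∀ τ ∈ Set.Icc t₀ T, φ τ t₀ x₀ ∈ Metric.ball xs r := fun τ hτ =>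
      Metric.mem_ball.mpr ((keyA t₀ x₀ ht₀ hx₀ τ hτ.1).trans hρr)
    have hv := hdecr t₀ ht₀ x₀ hball T hT hballs
    apply auxKL_antitoneOn
    intro tt htt
    obtain ⟨v', h1, h2⟩ := hv tt htt
    exact ⟨v', h1, h2.trans (neg_nonpos.mpr (hW₃.2.2.2 _ dist_nonneg))⟩
  -- Key Lemma : sandwich bound along trajectories
  have keyW : ∀ t₀ x₀, 0 ≤ t₀ → dist x₀ xs < c → ∀ t, t₀ ≤ t →
      W₁ (dist (φ t t₀ x₀) xs) ≤ W₂ (dist x₀ xs) := by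
    intro t₀ x₀ ht₀ hx₀ t ht
    have hball : x₀ ∈ Metric.ball xs r :=
      Metric.mem_ball.mpr (hx₀.trans_le (hcρ.trans hρr.le))
    have h1 : W₁ (dist (φ t t₀ x₀) xs) ≤ V t (φ t t₀ x₀) :=
      (hbound t (ht₀.trans ht) _
        (Metric.mem_ball.mpr ((keyA t₀ x₀ ht₀ hx₀ t ht).trans hρr))).1
    have h2 : V t (φ t t₀ x₀) ≤ V t₀ (φ t₀ t₀ x₀) :=
      keyV t₀ x₀ ht₀ hx₀ t ht ⟨le_refl t₀, ht⟩ ⟨ht, le_refl t⟩ ht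
    rw [hinit] at h2
    have h3 : V t₀ x₀ ≤ W₂ (dist x₀ xs) := (hbound t₀ ht₀ x₀ hball).2
    linarith
  -- Key Lemma : uniform attraction
  have keyT : ∀ ε, 0 < ε → ∃ T, 0 ≤ T ∧ ∀ t₀ x₀ t, 0 ≤ t₀ → dist x₀ xs < c →
      t₀ + T ≤ t → dist (φ t t₀ x₀) xs ≤ ε := by
    intro ε hε
    have hminpos : 0 < min ε ρ := lt_min hε hρ
    obtain ⟨δ, hδ, hδW⟩ := auxKL_exists_small hW₂ (auxKL_pos hW₁ hminpos)
    have hW₃δ : 0 < W₃ δ := auxKL_pos hW₃ hδ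
    have hW₂c : 0 ≤ W₂ c := hW₂.2.2.2 c hc.le
    refine ⟨W₂ c / W₃ δ + 1, by positivity, ?_⟩
    set T : ℝ := W₂ c / W₃ δ + 1 with hTdef
    have hT0 : 0 < T := by positivity
    intro t₀ x₀ t ht₀ hx₀ htT
    have htt₀ : t₀ ≤ t := by linarith
    have hball : x₀ ∈ Metric.ball xs r :=
      Metric.mem_ball.mpr (hx₀.trans_le (hcρ.trans hρr.le))
    have hex : ∃ τ ∈ Set.Icc t₀ (t₀ + T), dist (φ τ t₀ x₀) xs ≤ δ := by
      by_contra hno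
      push_neg at hno
      have hballs : ∀ τ ∈ Set.Icc t₀ (t₀ + T), φ τ t₀ x₀ ∈ Metric.ball xs r := fun τ hτ =>
        Metric.mem_ball.mpr ((keyA t₀ x₀ ht₀ hx₀ τ hτ.1).trans hρr)
      have hv := hdecr t₀ ht₀ x₀ hball (t₀ + T) (by linarith) hballs
      have hanti : AntitoneOn (fun s => V s (φ s t₀ x₀) + W₃ δ * s)
          (Set.Icc t₀ (t₀ + T)) := by
        apply auxKL_antitoneOn
        intro tt htt
        obtain ⟨v', h1, h2⟩ := hv tt htt
        refine ⟨v' + W₃ δ, h1.add (by simpa using (hasDerivAt_id tt).const_mul (W₃ δ)), ?_⟩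
        have h3 : W₃ δ ≤ W₃ (dist (φ tt t₀ x₀) xs) :=
          hW₃.2.1.monotoneOn (Set.mem_Ici.mpr hδ.le) (Set.mem_Ici.mpr dist_nonneg)
            (hno tt htt).le
        linarith
      have h2 := hanti ⟨le_refl t₀, by linarith⟩ ⟨by linarith, le_refl (t₀ + T)⟩ (by linarith)
      simp only at h2
      rw [hinit] at h2
      have hVub : V t₀ x₀ ≤ W₂ (dist x₀ xs) := (hbound t₀ ht₀ x₀ hball).2
      have hW₂x : W₂ (dist x₀ xs) < W₂ c :=
        hW₂.2.1 (Set.mem_Ici.mpr dist_nonneg) (Set.mem_Ici.mpr hc.le) hx₀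
      have hVlb : 0 ≤ V (t₀ + T) (φ (t₀ + T) t₀ x₀) :=
        le_trans (hW₁.2.2.2 _ dist_nonneg)
          (hbound (t₀ + T) (by linarith) _ (hballs (t₀ + T) ⟨by linarith, le_refl _⟩)).1
      have hfield : W₃ δ * T = W₂ c + W₃ δ := by
        rw [hTdef]; field_simp
      have hmul : W₃ δ * (t₀ + T) = W₃ δ * t₀ + W₃ δ * T := mul_add _ _ _
      linarith
    obtain ⟨τ, hτmem, hτδ⟩ := hex
    have hτt : τ ≤ t := hτmem.2.trans htT
    have h2 : V t (φ t t₀ x₀) ≤ V τ (φ τ t₀ x₀) :=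
      keyV t₀ x₀ ht₀ hx₀ t htt₀ ⟨hτmem.1, hτt⟩ ⟨htt₀, le_refl t⟩ hτt
    have h3 : V τ (φ τ t₀ x₀) ≤ W₂ (dist (φ τ t₀ x₀) xs) :=
      (hbound τ (ht₀.trans hτmem.1) _
        (Metric.mem_ball.mpr ((keyA t₀ x₀ ht₀ hx₀ τ hτmem.1).trans hρr))).2
    have h4 : W₂ (dist (φ τ t₀ x₀) xs) ≤ W₂ δ :=
      hW₂.2.1.monotoneOn (Set.mem_Ici.mpr dist_nonneg) (Set.mem_Ici.mpr hδ.le) hτδ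
    have h1 : W₁ (dist (φ t t₀ x₀) xs) ≤ V t (φ t t₀ x₀) :=
      (hbound t (ht₀.trans htt₀) _
        (Metric.mem_ball.mpr ((keyA t₀ x₀ ht₀ hx₀ t htt₀).trans hρr))).1
    have h5 : W₁ (dist (φ t t₀ x₀) xs) ≤ W₁ (min ε ρ) := by linarith
    exact (auxKL_le_of_le hW₁ dist_nonneg hminpos.le h5).trans (min_le_left _ _)
  -- the stability margin function M
  set c' : ℝ := c / 2 with hc'def
  have hc' : 0 < c' := by positivity
  have hc'c : c' < c := by rw [hc'def]; linarith
  set S : ℝ → Set ℝ := fun u => {d | ∃ t₀ t x₀, 0 ≤ t₀ ∧ t₀ ≤ t ∧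
    dist x₀ xs ≤ min u c' ∧ d = dist (φ t t₀ x₀) xs} with hSdef
  set M : ℝ → ℝ := fun u => sSup (S u) with hMdef
  have hSel : ∀ u, ∀ d ∈ S u, 0 ≤ d ∧ d ≤ ρ := by
    rintro u d ⟨t₀, t, x₀, ht₀, ht, hx₀, rfl⟩
    exact ⟨dist_nonneg, (keyA t₀ x₀ ht₀
      (lt_of_le_of_lt (hx₀.trans (min_le_right _ _)) hc'c) t ht).le⟩
  have hSbdd : ∀ u, BddAbove (S u) := fun u => ⟨ρ, fun d hd => (hSel u d hd).2⟩
  have hMnonneg : ∀ u, 0 ≤ M u := fun u => Real.sSup_nonneg (fun d hd => (hSel u d hd).1)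
  have hMmono : Monotone M := by
    intro u w huw
    rcases Set.eq_empty_or_nonempty (S u) with he | hne
    · rw [hMdef]; simp only; rw [he, Real.sSup_empty]; exact hMnonneg w
    · refine csSup_le_csSup (hSbdd w) hne ?_
      rintro d ⟨t₀, t, x₀, h1, h2, h3, h4⟩
      exact ⟨t₀, t, x₀, h1, h2, h3.trans (min_le_min huw (le_refl _)), h4⟩
  have hM0 : M 0 = 0 := by
    refine le_antisymm (Real.sSup_le ?_ (le_refl 0)) (hMnonneg 0)
    rintro d ⟨t₀, t, x₀, ht₀, ht, hx₀, rfl⟩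
    have hd0 : dist x₀ xs = 0 :=
      le_antisymm (hx₀.trans (min_le_left _ _)) dist_nonneg
    rw [dist_eq_zero] at hd0
    rw [hd0, heq t₀ t ht₀ ht, dist_self]
  have hMbound : ∀ t₀ t x₀, 0 ≤ t₀ → t₀ ≤ t → dist x₀ xs ≤ c' →
      dist (φ t t₀ x₀) xs ≤ M (dist x₀ xs) :=
    fun t₀ t x₀ h1 h2 h3 => le_csSup (hSbdd _) ⟨t₀, t, x₀, h1, h2, le_min (le_refl _) h3, rfl⟩
  have hMsmall : ∀ ε, 0 < ε → ∃ u₀ > 0, ∀ u, u ≤ u₀ → M u ≤ ε := by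
    intro ε hε
    have hminpos : 0 < min ε ρ := lt_min hε hρ
    obtain ⟨u₀, hu₀, hu₀W⟩ := auxKL_exists_small hW₂ (auxKL_pos hW₁ hminpos)
    refine ⟨u₀, hu₀, fun u hu => ?_⟩
    refine Real.sSup_le ?_ hε.le
    rintro d ⟨t₀, t, x₀, ht₀, ht, hx₀, rfl⟩
    have hd₀ : dist x₀ xs ≤ u₀ := hx₀.trans ((min_le_left _ _).trans hu)
    have hd₀c : dist x₀ xs < c := lt_of_le_of_lt (hx₀.trans (min_le_right _ _)) hc'c
    have h1 := keyW t₀ x₀ ht₀ hd₀c t ht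
    have h2 : W₂ (dist x₀ xs) ≤ W₂ u₀ :=
      hW₂.2.1.monotoneOn (Set.mem_Ici.mpr dist_nonneg) (Set.mem_Ici.mpr hu₀.le) hd₀
    have h5 : W₁ (dist (φ t t₀ x₀) xs) ≤ W₁ (min ε ρ) := by linarith
    exact (auxKL_le_of_le hW₁ dist_nonneg hminpos.le h5).trans (min_le_left _ _)
  -- the class K upper envelope α
  set α : ℝ → ℝ := fun u => u + ∫ s in (0:ℝ)..1, M (u * s + u) with hαdef
  have hMint : ∀ u, 0 ≤ u → ∀ a b : ℝ,
      IntervalIntegrable (fun s => M (u * s + u)) MeasureTheory.volume a b := by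
    intro u hu a b
    have hmono : Monotone fun s => M (u * s + u) := fun x y hxy =>
      hMmono (by nlinarith [mul_nonneg hu (sub_nonneg.mpr hxy)])
    exact hmono.intervalIntegrable
  have hαge : ∀ u, 0 ≤ u → M u ≤ α u := by
    intro u hu
    have h1 : (∫ _ in (0:ℝ)..1, M u) ≤ ∫ s in (0:ℝ)..1, M (u * s + u) := by
      refine intervalIntegral.integral_mono_on zero_le_one
        intervalIntegrable_const (hMint u hu 0 1) ?_
      intro s hs
      exact hMmono (by nlinarith [mul_nonneg hu hs.1])
    rw [intervalIntegral.integral_const] at h1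
    simp only [sub_zero, one_smul] at h1
    rw [hαdef]; simp only
    linarith
  have hαnonneg : ∀ u, 0 ≤ u → 0 ≤ α u := fun u hu => (hMnonneg u).trans (hαge u hu)
  have hα0 : α 0 = 0 := by
    rw [hαdef]; simp [hM0]
  have hαstrict : StrictMonoOn α (Set.Ici 0) := by
    intro u hu w hw huw
    have h1 : (∫ s in (0:ℝ)..1, M (u * s + u)) ≤ ∫ s in (0:ℝ)..1, M (w * s + w) := by
      refine intervalIntegral.integral_mono_on zero_le_one
        (hMint u hu 0 1) (hMint w hw 0 1) ?_
      intro s hs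
      exact hMmono (by nlinarith [mul_nonneg (sub_nonneg.mpr huw.le) hs.1])
    rw [hαdef]; simp only
    linarith
  have hMintall : ∀ a b : ℝ, IntervalIntegrable M MeasureTheory.volume a b :=
    fun a b => hMmono.intervalIntegrable
  set F : ℝ → ℝ := fun x => ∫ s in (0:ℝ)..x, M s with hFdef
  have hFcont : Continuous F := intervalIntegral.continuous_primitive hMintall 0
  have hαeq : ∀ u : ℝ, u ≠ 0 → α u = u + u⁻¹ * (F (2 * u) - F u) := by
    intro u hu
    have h1 : (∫ s in (0:ℝ)..1, M (u * s + u)) =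
        u⁻¹ • ∫ x in (u * 0 + u)..(u * 1 + u), M x :=
      intervalIntegral.integral_comp_mul_add M hu u
    have h2 : (∫ x in u..(2 * u), M x) = F (2 * u) - F u := by
      have h3 := intervalIntegral.integral_add_adjacent_intervals
        (hMintall 0 u) (hMintall u (2 * u))
      rw [hFdef]; simp only
      linarith
    rw [hαdef]; simp only
    rw [h1]
    rw [show u * 0 + u = u by ring, show u * 1 + u = 2 * u by ring, h2, smul_eq_mul]
  have hαcont : ContinuousOn α (Set.Ici 0) := by
    intro u hu
    rcases eq_or_lt_of_le (Set.mem_Ici.mp hu) with h0 | hpos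
    · -- continuity at 0 within Ici 0
      rw [← h0]
      rw [ContinuousWithinAt, hα0]
      rw [Metric.tendsto_nhdsWithin_nhds]
      intro ε hε
      obtain ⟨u₀, hu₀, hu₀M⟩ := hMsmall (ε / 4) (by linarith)
      refine ⟨min (u₀ / 2) (ε / 4), by positivity, ?_⟩
      intro x hx hxd
      rw [Real.dist_eq, sub_zero] at hxd
      have hx0 : 0 ≤ x := Set.mem_Ici.mp hx
      rw [abs_of_nonneg hx0] at hxd
      have hxu : x < u₀ / 2 := lt_of_lt_of_le hxd (min_le_left _ _)
      have hxε : x < ε / 4 := lt_of_lt_of_le hxd (min_le_right _ _)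
      have hub : α x ≤ x + M (2 * x) := by
        have h1 : (∫ s in (0:ℝ)..1, M (x * s + x)) ≤ ∫ _ in (0:ℝ)..1, M (2 * x) := by
          refine intervalIntegral.integral_mono_on zero_le_one
            (hMint x hx0 0 1) intervalIntegrable_const ?_
          intro s hs
          exact hMmono (by nlinarith [mul_nonneg hx0 (sub_nonneg.mpr hs.2)])
        rw [intervalIntegral.integral_const] at h1
        simp only [sub_zero, one_smul] at h1
        rw [hαdef]; simp only
        linarith
      have hM2x : M (2 * x) ≤ ε / 4 := hu₀M (2 * x) (by linarith)
      rw [Real.dist_eq, sub_zero, abs_of_nonneg (hαnonneg x hx0)]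
      linarith
    · -- continuity at u > 0
      apply ContinuousAt.continuousWithinAt
      have hev : (fun w => w + w⁻¹ * (F (2 * w) - F w)) =ᶠ[nhds u] α := by
        filter_upwards [Ioi_mem_nhds hpos] with w hw
        exact (hαeq w (ne_of_gt hw)).symm
      refine ContinuousAt.congr ?_ hev
      have hc1 : ContinuousAt (fun w : ℝ => w⁻¹) u := continuousAt_inv₀ (ne_of_gt hpos)
      have hc2 : Continuous fun w : ℝ => F (2 * w) - F w :=
        (hFcont.comp (continuous_const.mul continuous_id)).sub hFcont
      exact continuousAt_id.add (hc1.mul hc2.continuousAt)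
  -- the decay envelope G and γ
  set Sg : ℝ → Set ℝ := fun s => {d | ∃ t₀ t x₀, 0 ≤ t₀ ∧ t₀ ≤ t ∧
    dist x₀ xs ≤ c' ∧ s ≤ t - t₀ ∧ d = dist (φ t t₀ x₀) xs} with hSgdef
  set G : ℝ → ℝ := fun s => sSup (Sg s) with hGdef
  have hSgel : ∀ s, ∀ d ∈ Sg s, 0 ≤ d ∧ d ≤ ρ := by
    rintro s d ⟨t₀, t, x₀, ht₀, ht, hx₀, hst, rfl⟩
    exact ⟨dist_nonneg, (keyA t₀ x₀ ht₀ (lt_of_le_of_lt hx₀ hc'c) t ht).le⟩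
  have hSgbdd : ∀ s, BddAbove (Sg s) := fun s => ⟨ρ, fun d hd => (hSgel s d hd).2⟩
  have hGnonneg : ∀ s, 0 ≤ G s := fun s => Real.sSup_nonneg (fun d hd => (hSgel s d hd).1)
  have hGanti : Antitone G := by
    intro s s' hss'
    rcases Set.eq_empty_or_nonempty (Sg s') with he | hne
    · rw [hGdef]; simp only; rw [he, Real.sSup_empty]; exact hGnonneg s
    · refine csSup_le_csSup (hSgbdd s) hne ?_
      rintro d ⟨t₀, t, x₀, h1, h2, h3, h4, h5⟩
      exact ⟨t₀, t, x₀, h1, h2, h3, hss'.trans h4, h5⟩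
  have hGbound : ∀ t₀ t x₀, 0 ≤ t₀ → t₀ ≤ t → dist x₀ xs ≤ c' →
      dist (φ t t₀ x₀) xs ≤ G (t - t₀) :=
    fun t₀ t x₀ h1 h2 h3 => le_csSup (hSgbdd _) ⟨t₀, t, x₀, h1, h2, h3, le_refl _, rfl⟩
  have hGsmall : ∀ ε, 0 < ε → ∃ T, ∀ s, T ≤ s → G s ≤ ε := by
    intro ε hε
    obtain ⟨T, hT0, hT⟩ := keyT ε hε
    refine ⟨T, fun s hs => Real.sSup_le ?_ hε.le⟩
    rintro d ⟨t₀, t, x₀, h1, h2, h3, h4, rfl⟩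
    exact hT t₀ x₀ t h1 (lt_of_le_of_lt h3 hc'c) (by linarith)
  have hGtend : Filter.Tendsto G Filter.atTop (nhds 0) := by
    rw [Metric.tendsto_atTop]
    intro ε hε
    obtain ⟨T, hT⟩ := hGsmall (ε / 2) (by linarith)
    refine ⟨T, fun s hs => ?_⟩
    rw [Real.dist_eq, sub_zero, abs_of_nonneg (hGnonneg s)]
    linarith [hT s hs]
  have hGint : ∀ a b : ℝ, IntervalIntegrable G MeasureTheory.volume a b :=
    fun a b => hGanti.intervalIntegrable
  have hGshiftint : ∀ s a b : ℝ,
      IntervalIntegrable (fun t => G (t + (s - 1))) MeasureTheory.volume a b := by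
    intro s a b
    have : Antitone fun t => G (t + (s - 1)) := fun x y hxy =>
      hGanti (by linarith)
    exact this.intervalIntegrable
  set γ : ℝ → ℝ := fun s => c * Real.exp (-s) + ∫ t in (0:ℝ)..1, G (t + (s - 1)) with hγdef
  have hγpos : ∀ s, 0 < γ s := by
    intro s
    have h1 : 0 < c * Real.exp (-s) := mul_pos hc (Real.exp_pos _)
    have h2 : 0 ≤ ∫ t in (0:ℝ)..1, G (t + (s - 1)) :=
      intervalIntegral.integral_nonneg zero_le_one (fun t _ => hGnonneg _)
    rw [hγdef]; simp only
    linarith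
  have hγge : ∀ s, G s ≤ γ s := by
    intro s
    have h1 : (∫ _ in (0:ℝ)..1, G s) ≤ ∫ t in (0:ℝ)..1, G (t + (s - 1)) := by
      refine intervalIntegral.integral_mono_on zero_le_one
        intervalIntegrable_const (hGshiftint s 0 1) ?_
      intro t ht
      exact hGanti (by linarith [ht.2])
    rw [intervalIntegral.integral_const] at h1
    simp only [sub_zero, one_smul] at h1
    have h2 : 0 < c * Real.exp (-s) := mul_pos hc (Real.exp_pos _)
    rw [hγdef]; simp only
    linarith
  have hγanti : Antitone γ := by
    intro s s' hss'
    have h1 : c * Real.exp (-s') ≤ c * Real.exp (-s) :=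
      mul_le_mul_of_nonneg_left (Real.exp_le_exp.mpr (neg_le_neg hss')) hc.le
    have h2 : (∫ t in (0:ℝ)..1, G (t + (s' - 1))) ≤ ∫ t in (0:ℝ)..1, G (t + (s - 1)) := by
      refine intervalIntegral.integral_mono_on zero_le_one
        (hGshiftint s' 0 1) (hGshiftint s 0 1) ?_
      intro t _
      exact hGanti (by linarith)
    rw [hγdef]; simp only
    linarith
  have hγconteq : (fun s => ∫ t in (0:ℝ)..1, G (t + (s - 1))) =
      fun s => (∫ x in (0:ℝ)..s, G x) - ∫ x in (0:ℝ)..(s - 1), G x := by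
    funext s
    rw [intervalIntegral.integral_comp_add_right G (s - 1)]
    have h3 := intervalIntegral.integral_add_adjacent_intervals
      (hGint 0 (s - 1)) (hGint (s - 1) s)
    rw [show (0:ℝ) + (s - 1) = s - 1 by ring, show (1:ℝ) + (s - 1) = s by ring]
    linarith
  have hγcont : Continuous γ := by
    rw [hγdef]
    apply Continuous.add
    · exact continuous_const.mul (Real.continuous_exp.comp continuous_neg)
    · rw [hγconteq]
      have hp : Continuous fun x : ℝ => ∫ t in (0:ℝ)..x, G t :=
        intervalIntegral.continuous_primitive hGint 0
      exact hp.sub (hp.comp (continuous_id.sub continuous_const))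
  have hγtend : Filter.Tendsto γ Filter.atTop (nhds 0) := by
    have h1 : Filter.Tendsto (fun s => c * Real.exp (-s)) Filter.atTop (nhds 0) := by
      have := Real.tendsto_exp_neg_atTop_nhds_zero.const_mul c
      simpa using this
    have h2 : Filter.Tendsto (fun s => ∫ t in (0:ℝ)..1, G (t + (s - 1)))
        Filter.atTop (nhds 0) := by
      have hup : ∀ s : ℝ, (∫ t in (0:ℝ)..1, G (t + (s - 1))) ≤ G (s - 1) := by
        intro s
        have h1' : (∫ t in (0:ℝ)..1, G (t + (s - 1))) ≤ ∫ _ in (0:ℝ)..1, G (s - 1) := by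
          refine intervalIntegral.integral_mono_on zero_le_one
            (hGshiftint s 0 1) intervalIntegrable_const ?_
          intro t ht
          exact hGanti (by linarith [ht.1])
        rw [intervalIntegral.integral_const] at h1'
        simpa using h1'
      have hlo : ∀ s : ℝ, 0 ≤ ∫ t in (0:ℝ)..1, G (t + (s - 1)) := fun s =>
        intervalIntegral.integral_nonneg zero_le_one (fun t _ => hGnonneg _)
      have hG1 : Filter.Tendsto (fun s : ℝ => G (s - 1)) Filter.atTop (nhds 0) :=
        hGtend.comp (Filter.tendsto_atTop_add_const_right Filter.atTop (-1) Filter.tendsto_id)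
      exact tendsto_of_tendsto_of_tendsto_of_le_of_le tendsto_const_nhds hG1 hlo hup
    have := h1.add h2
    rw [add_zero] at this
    rw [hγdef]
    exact this
  -- assemble β
  refine ⟨fun x s => Real.sqrt (α x * γ s), c', ⟨?_, ?_, ?_⟩, hc', ?_⟩
  · -- continuity of uncurried β
    have h1 : ContinuousOn (fun p : ℝ × ℝ => α p.1) (Set.Ici 0 ×ˢ Set.Ici 0) :=
      hαcont.comp continuous_fst.continuousOn (fun p hp => hp.1)
    have h2 : ContinuousOn (fun p : ℝ × ℝ => γ p.2) (Set.Ici 0 ×ˢ Set.Ici 0) :=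
      (hγcont.comp continuous_snd).continuousOn
    exact Real.continuous_sqrt.comp_continuousOn (h1.mul h2)
  · -- class K in first argument
    intro s _
    refine ⟨Real.continuous_sqrt.comp_continuousOn (hαcont.mul continuousOn_const),
      ?_, ?_, fun x _ => Real.sqrt_nonneg _⟩
    · intro u hu w hw huw
      exact Real.sqrt_lt_sqrt (mul_nonneg (hαnonneg u hu) (hγpos s).le)
        (mul_lt_mul_of_pos_right (hαstrict hu hw huw) (hγpos s))
    · show Real.sqrt (α 0 * γ s) = 0
      rw [hα0, zero_mul, Real.sqrt_zero]
  · -- antitone and tendsto in second argument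
    intro u hu
    constructor
    · intro s _ s' _ hss'
      exact Real.sqrt_le_sqrt (mul_le_mul_of_nonneg_left (hγanti hss') (hαnonneg u hu))
    · have h1 : Filter.Tendsto (fun s => α u * γ s) Filter.atTop (nhds (α u * 0)) :=
        hγtend.const_mul (α u)
      rw [mul_zero] at h1
      have h2 := (Real.continuous_sqrt.tendsto 0).comp h1
      simpa [Function.comp_def] using h2
  · -- the final bound
    intro t₀ t x₀ ht₀ htt hx₀
    have hd1 : dist (φ t t₀ x₀) xs ≤ α (dist x₀ xs) :=
      (hMbound t₀ t x₀ ht₀ htt hx₀.le).trans (hαge _ dist_nonneg)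
    have hd2 : dist (φ t t₀ x₀) xs ≤ γ (t - t₀) :=
      (hGbound t₀ t x₀ ht₀ htt hx₀.le).trans (hγge _)
    calc dist (φ t t₀ x₀) xs ≤ min (α (dist x₀ xs)) (γ (t - t₀)) := le_min hd1 hd2
    _ ≤ Real.sqrt (α (dist x₀ xs) * γ (t - t₀)) :=
      auxKL_min_le_sqrt (hαnonneg _ dist_nonneg) (hγpos _).le
end

section
/- Let (X, d) be a metric space, let φ be a time-varying flow on X with equilibrium point x⋆, and let D be an open ball of radius r > 0 centered at x⋆. Suppose there are constants c₁, c₂, c₃ > 0 and p > 0 and a continuous function V : ℝ × X → ℝ with c₁·d(x, x⋆)^p ≤ V(t, x) ≤ c₂·d(x, x⋆)^p for all t ≥ 0 and x ∈ D, and suppose that for every t₀ ≥ 0 and x₀ ∈ D, the function v(t) = V(t, φ(t; t₀, x₀)) is differentiable with v′(t) ≤ −c₃·d(φ(t; t₀, x₀), x⋆)^p on any interval on which the trajectory remains in D. Then x⋆ is exponentially stable: there exist constants K > 0, λ > 0 and c > 0 such that d(φ(t; t₀, x₀), x⋆) ≤ K·e^{−λ(t−t₀)}·d(x₀, x⋆)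 for all t ≥ t₀ ≥ 0 and all x₀ with d(x₀, x⋆) < c. -/
lemma gronwall_aux (v : ℝ → ℝ) (lam t₀ T : ℝ) (hT : t₀ ≤ T)
    (h : ∀ t ∈ Set.Icc t₀ T, ∃ v', HasDerivAt v v' t ∧ v' ≤ -lam * v t) :
    v T ≤ v t₀ * Real.exp (-(lam * (T - t₀)))  := by
  set g : ℝ → ℝ := fun t => v t * Real.exp (lam * (t - t₀)) with hg
  have he : ∀ t : ℝ, HasDerivAt (fun s => Real.exp (lam * (s - t₀)))
      (Real.exp (lam * (t - t₀)) * (lam * 1)) t := fun t =>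
    (((hasDerivAt_id t).sub_const t₀).const_mul lam).exp
  have hcont : ContinuousOn g (Set.Icc t₀ T) := by
    intro t ht
    obtain ⟨v', hv', _⟩ := h t ht
    exact (hv'.continuousAt.mul (he t).continuousAt).continuousWithinAt
  have hgd : ∀ t ∈ Set.Icc t₀ T, ∃ v', HasDerivAt g
      (v' * Real.exp (lam * (t - t₀)) + v t * (Real.exp (lam * (t - t₀)) * (lam * 1))) t
      ∧ v' ≤ -lam * v t := by
    intro t ht
    obtain ⟨v', hv', hle⟩ := h t ht
    exact ⟨v', hv'.mul (he t), hle⟩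
  have hanti : AntitoneOn g (Set.Icc t₀ T) := by
    apply antitoneOn_of_deriv_nonpos (convex_Icc t₀ T) hcont
    · intro t ht
      obtain ⟨v', hd, _⟩ := hgd t (interior_subset ht)
      exact hd.differentiableAt.differentiableWithinAt
    · intro t ht
      obtain ⟨v', hd, hle⟩ := hgd t (interior_subset ht)
      rw [hd.deriv]
      have hE := Real.exp_pos (lam * (t - t₀))
      nlinarith
  have hgt : g T ≤ g t₀ := hanti (Set.left_mem_Icc.2 hT) (Set.right_mem_Icc.2 hT) hT
  have h0 : g t₀ = v t₀ := by simp [hg]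
  rw [h0] at hgt
  have hE := Real.exp_pos (lam * (T - t₀))
  rw [Real.exp_neg, ← div_eq_mul_inv, le_div_iff₀ hE]
  exact hgt

/-- Direct Lyapunov theorem for exponential stability on a metric
space. If `c₁·d(x,x⋆)^p ≤ V(t,x) ≤ c₂·d(x,x⋆)^p` on a ball `D` about `x⋆` and
along every trajectory remaining in `D` the function `v(t) = V(t, φ(t; t₀, x₀))`
is differentiable with `v′(t) ≤ −c₃·d(φ(t; t₀, x₀), x⋆)^p`, then `x⋆` is
exponentially stable. -/
theorem exponential_stability_of_lyapunov
    {X : Type*} [MetricSpace X]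
    (φ : ℝ → ℝ → X → X) (xs : X)
    (hflow : IsFlow φ) (heq : IsEquilibrium φ xs)
    (r : ℝ) (hr : 0 < r)
    (c₁ c₂ c₃ p : ℝ) (hc₁ : 0 < c₁) (hc₂ : 0 < c₂) (hc₃ : 0 < c₃) (hp : 0 < p)
    (V : ℝ → X → ℝ)
    (hVcont : Continuous fun q : ℝ × X => V q.1 q.2)
    (hbound : ∀ t, 0 ≤ t → ∀ x ∈ Metric.ball xs r,
      c₁ * dist x xs ^ p ≤ V t x ∧ V t x ≤ c₂ * dist x xs ^ p)
    (hdecr : ∀ t₀, 0 ≤ t₀ → ∀ x₀ ∈ Metric.ball xs r, ∀ T, t₀ ≤ T →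
      (∀ τ ∈ Set.Icc t₀ T, φ τ t₀ x₀ ∈ Metric.ball xs r) →
      ∀ t ∈ Set.Icc t₀ T, ∃ v' : ℝ,
        HasDerivAt (fun s => V s (φ s t₀ x₀)) v' t ∧
        v' ≤ -(c₃ * dist (φ t t₀ x₀) xs ^ p)) :
    ∃ (K lam c : ℝ), 0 < K ∧ 0 < lam ∧ 0 < c ∧
      ∀ t₀ t x₀, 0 ≤ t₀ → t₀ ≤ t → dist x₀ xs < c →
        dist (φ t t₀ x₀) xs ≤ K * Real.exp (-lam * (t - t₀)) * dist x₀ xs := by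
  have hp' : p ≠ 0 := hp.ne'
  set M : ℝ := max ((c₂ / c₁) ^ (1/p)) 1 with hM
  have hM1 : (1:ℝ) ≤ M := le_max_right _ _
  have hM0 : (0:ℝ) < M := lt_of_lt_of_le one_pos hM1
  set lam : ℝ := c₃ / (c₂ * p) with hlam
  have hlam0 : 0 < lam := div_pos hc₃ (mul_pos hc₂ hp)
  set lam₀ : ℝ := c₃ / c₂ with hlam₀
  have hlam₀0 : 0 < lam₀ := div_pos hc₃ hc₂
  set c : ℝ := (r/2) / M with hc
  have hc0 : 0 < c := div_pos (half_pos hr) hM0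
  have hMc : M * c = r/2 := by
    rw [hc]; field_simp; all_goals ring
  have hcr : c ≤ r/2 := by
    nlinarith
  -- core bound along trajectories remaining in the ball
  have core : ∀ t₀ x₀, 0 ≤ t₀ → ∀ T, t₀ ≤ T →
      (∀ τ ∈ Set.Icc t₀ T, φ τ t₀ x₀ ∈ Metric.ball xs r) →
      dist (φ T t₀ x₀) xs ≤ M * Real.exp (-lam * (T - t₀)) * dist x₀ xs := by
    intro t₀ x₀ ht₀ T hT hIcc
    have hx₀ball : x₀ ∈ Metric.ball xs r := by
      have := hIcc t₀ (Set.left_mem_Icc.2 hT)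
      rwa [hflow.1] at this
    set v : ℝ → ℝ := fun s => V s (φ s t₀ x₀) with hv
    have hgron : v T ≤ v t₀ * Real.exp (-(lam₀ * (T - t₀))) := by
      apply gronwall_aux v lam₀ t₀ T hT
      intro t ht
      obtain ⟨v', hd, hle⟩ := hdecr t₀ ht₀ x₀ hx₀ball T hT hIcc t ht
      refine ⟨v', hd, hle.trans ?_⟩
      have htpos : 0 ≤ t := le_trans ht₀ ht.1
      have hvle : v t ≤ c₂ * dist (φ t t₀ x₀) xs ^ p :=
        (hbound t htpos _ (hIcc t ht)).2
      have h1 : lam₀ * v t ≤ lam₀ * (c₂ * dist (φ t t₀ x₀) xs ^ p) :=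
        mul_le_mul_of_nonneg_left hvle hlam₀0.le
      have h2 : lam₀ * (c₂ * dist (φ t t₀ x₀) xs ^ p) = c₃ * dist (φ t t₀ x₀) xs ^ p := by
        rw [hlam₀]; field_simp
      linarith [h1.trans_eq h2]
    set a : ℝ := dist (φ T t₀ x₀) xs with ha
    set b : ℝ := dist x₀ xs with hb
    have hlow : c₁ * a ^ p ≤ v T :=
      (hbound T (le_trans ht₀ hT) _ (hIcc T (Set.right_mem_Icc.2 hT))).1
    have hupp : v t₀ ≤ c₂ * b ^ p := by
      have h := (hbound t₀ ht₀ x₀ hx₀ball).2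
      have hvt₀ : v t₀ = V t₀ x₀ := by simp only [hv]; rw [hflow.1]
      rw [hvt₀]; exact h
    have hE0 : (0:ℝ) < Real.exp (-(lam₀ * (T - t₀))) := Real.exp_pos _
    have hap : a ^ p ≤ (c₂ / c₁) * Real.exp (-(lam₀ * (T - t₀))) * b ^ p := by
      have h3 : c₁ * a ^ p ≤ c₂ * b ^ p * Real.exp (-(lam₀ * (T - t₀))) := by
        calc c₁ * a ^ p ≤ v T := hlow
          _ ≤ v t₀ * Real.exp (-(lam₀ * (T - t₀))) := hgron
          _ ≤ c₂ * b ^ p * Real.exp (-(lam₀ * (T - t₀))) :=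
              mul_le_mul_of_nonneg_right hupp hE0.le
      rw [div_mul_eq_mul_div, div_mul_eq_mul_div, le_div_iff₀ hc₁]
      nlinarith
    have ha0 : (0:ℝ) ≤ a := dist_nonneg
    have hb0 : (0:ℝ) ≤ b := dist_nonneg
    have hrhs0 : (0:ℝ) ≤ (c₂ / c₁) * Real.exp (-(lam₀ * (T - t₀))) :=
      mul_nonneg (div_pos hc₂ hc₁).le hE0.le
    -- raise to power 1/p
    have hkey : a ≤ ((c₂ / c₁) ^ (1/p)) * Real.exp (-(lam₀ * (T - t₀))) ^ (1/p) * b := by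
      have h4 : (a ^ p) ^ (1/p) ≤ ((c₂ / c₁) * Real.exp (-(lam₀ * (T - t₀))) * b ^ p) ^ (1/p) :=
        Real.rpow_le_rpow (Real.rpow_nonneg ha0 p) hap (by positivity)
      have h5 : (a ^ p) ^ (1/p) = a := by
        rw [← Real.rpow_mul ha0, mul_one_div, div_self hp', Real.rpow_one]
      have h6 : ((c₂ / c₁) * Real.exp (-(lam₀ * (T - t₀))) * b ^ p) ^ (1/p)
          = ((c₂ / c₁) ^ (1/p)) * Real.exp (-(lam₀ * (T - t₀))) ^ (1/p) * b := by
        rw [Real.mul_rpow hrhs0 (Real.rpow_nonneg hb0 p),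
          Real.mul_rpow (div_pos hc₂ hc₁).le hE0.le,
          ← Real.rpow_mul hb0, mul_one_div, div_self hp', Real.rpow_one]
      rw [h5, h6] at h4
      exact h4
    have hexp : Real.exp (-(lam₀ * (T - t₀))) ^ (1/p) = Real.exp (-lam * (T - t₀)) := by
      rw [← Real.exp_mul]
      congr 1
      rw [hlam, hlam₀]
      field_simp
      all_goals ring
    rw [hexp] at hkey
    calc a ≤ ((c₂ / c₁) ^ (1/p)) * Real.exp (-lam * (T - t₀)) * b := hkey
      _ ≤ M * Real.exp (-lam * (T - t₀)) * b := by
          have hle : ((c₂ / c₁) ^ (1/p)) ≤ M := le_max_left _ _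
          have he0 : (0:ℝ) ≤ Real.exp (-lam * (T - t₀)) := (Real.exp_pos _).le
          exact mul_le_mul_of_nonneg_right (mul_le_mul_of_nonneg_right hle he0) hb0
  refine ⟨M, lam, c, hM0, hlam0, hc0, ?_⟩
  intro t₀ t x₀ ht₀ ht hx
  -- invariance: the trajectory stays in the ball of radius r/2
  have hf : Continuous fun s => dist (φ s t₀ x₀) xs :=
    (hflow.2.2 t₀ x₀).dist continuous_const
  have hball : ∀ s, t₀ ≤ s → dist (φ s t₀ x₀) xs < r/2 := by
    by_contra hcon
    push_neg at hcon
    obtain ⟨s₀, hs₀1, hs₀2⟩ := hcon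
    set A : Set ℝ := {s | t₀ ≤ s ∧ r/2 ≤ dist (φ s t₀ x₀) xs} with hA
    have hAne : A.Nonempty := ⟨s₀, hs₀1, hs₀2⟩
    have hAclosed : IsClosed A := by
      have : A = Set.Ici t₀ ∩ (fun s => dist (φ s t₀ x₀) xs) ⁻¹' Set.Ici (r/2) := by
        ext s
        simp only [hA, Set.mem_setOf_eq, Set.mem_inter_iff, Set.mem_Ici, Set.mem_preimage]
      rw [this]
      exact isClosed_Ici.inter (isClosed_Ici.preimage hf)
    have hAbdd : BddBelow A := ⟨t₀, fun x hx => hx.1⟩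
    set T := sInf A with hT
    have hTA : T ∈ A := hAclosed.csInf_mem hAne hAbdd
    have hTt₀ : t₀ ≤ T := hTA.1
    have ht₀x : dist (φ t₀ t₀ x₀) xs < r/2 := by
      rw [hflow.1]; exact lt_of_lt_of_le hx hcr
    have hTne : t₀ ≠ T := by
      intro h; rw [← h] at hTA; exact absurd hTA.2 (not_le.2 ht₀x)
    have hTlt : t₀ < T := lt_of_le_of_ne hTt₀ hTne
    have hless : ∀ s ∈ Set.Ico t₀ T, dist (φ s t₀ x₀) xs < r/2 := by
      intro s hs
      by_contra h
      push_neg at h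
      exact absurd (csInf_le hAbdd ⟨hs.1, h⟩) (not_le.2 hs.2)
    have hfT : dist (φ T t₀ x₀) xs ≤ r/2 := by
      have htend : Filter.Tendsto (fun s => dist (φ s t₀ x₀) xs) (nhdsWithin T (Set.Iio T))
          (nhds (dist (φ T t₀ x₀) xs)) := (hf.continuousAt).continuousWithinAt.tendsto
      refine le_of_tendsto htend ?_
      filter_upwards [Ioo_mem_nhdsLT_of_mem (Set.mem_Ioc.2 ⟨hTlt, le_refl T⟩)] with s hs
      exact (hless s ⟨hs.1.le, hs.2⟩).le
    have hIcc : ∀ τ ∈ Set.Icc t₀ T, φ τ t₀ x₀ ∈ Metric.ball xs r := by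
      intro τ hτ
      rcases lt_or_eq_of_le hτ.2 with h | h
      · exact Metric.mem_ball.2 (lt_trans (hless τ ⟨hτ.1, h⟩) (by linarith))
      · rw [h]; exact Metric.mem_ball.2 (lt_of_le_of_lt hfT (by linarith))
    have hcore := core t₀ x₀ ht₀ T hTt₀ hIcc
    have hexple : Real.exp (-lam * (T - t₀)) ≤ 1 := by
      apply Real.exp_le_one_iff.2
      nlinarith
    have hb0 : (0:ℝ) ≤ dist x₀ xs := dist_nonneg
    have : dist (φ T t₀ x₀) xs < r/2 := by
      calc dist (φ T t₀ x₀) xs ≤ M * Real.exp (-lam * (T - t₀)) * dist x₀ xs := hcore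
        _ ≤ M * dist x₀ xs := by nlinarith [Real.exp_pos (-lam * (T - t₀)), mul_nonneg hM0.le hb0]
        _ < M * c := (mul_lt_mul_iff_right₀ hM0).2 hx
        _ = r/2 := hMc
    exact absurd hTA.2 (not_le.2 this)
  exact core t₀ x₀ ht₀ t ht (fun τ hτ =>
    Metric.mem_ball.2 (lt_trans (hball τ hτ.1) (by linarith)))
end

section
/- Let (X, d) be a metric space, let φ be a time-varying flow on X with equilibrium point x⋆, and let L, K, λ, δ > 0. Assume: (i) the lower Lipschitz estimate d(φ(τ; t, x), x⋆) ≥ e^{−L(τ−t)}·d(x, x⋆) for all τ ≥ t and all x ∈ X; (ii) the flow is uniformly globally exponentially stable: d(φ(τ; t, x), x⋆) ≤ K·e^{−λ(τ−t)}·d(x, x⋆) for all τ ≥ t ≥ 0 and all x ∈ X. Define V(t, x) = ∫ₜ^{t+δ} d(φ(τ; t, x), x⋆) dτ. Then for all t ≥ 0 and all x ∈ X, ((1 − e^{−Lδ})/L)·d(x, x⋆) ≤ V(t, x) ≤ (K(1 − e^{−λδ})/λ)·d(x, x⋆). -/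
/-- Item 1 of the converse Lyapunov theorem for UGES systems.
Under the lower Lipschitz estimate and uniform global exponential stability, the
candidate `V(t, x) = ∫ₜ^{t+δ} d(φ(τ; t, x), x⋆) dτ` is sandwiched between
linear functions of `d(x, x⋆)`. -/
theorem converse_exp_bounds
    {X : Type*} [MetricSpace X]
    (φ : ℝ → ℝ → X → X) (xs : X)
    (hflow : IsFlow φ) (heq : IsEquilibrium φ xs)
    (L K lam δ : ℝ) (hL : 0 < L) (hK : 0 < K) (hlam : 0 < lam) (hδ : 0 < δ)
    (hlower : ∀ t τ x, t ≤ τ →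
      Real.exp (-L * (τ - t)) * dist x xs ≤ dist (φ τ t x) xs)
    (hUGES : ∀ t τ x, 0 ≤ t → t ≤ τ →
      dist (φ τ t x) xs ≤ K * Real.exp (-lam * (τ - t)) * dist x xs) :
    ∀ t x, 0 ≤ t →
      ((1 - Real.exp (-L * δ)) / L) * dist x xs
          ≤ (∫ τ in t..(t + δ), dist (φ τ t x) xs) ∧
      (∫ τ in t..(t + δ), dist (φ τ t x) xs)
          ≤ (K * (1 - Real.exp (-lam * δ)) / lam) * dist x xs := by
  intro t x ht
  have hle : t ≤ t + δ := by linarith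
  have hcont : Continuous fun τ => dist (φ τ t x) xs :=
    (hflow.2.2 t x).dist continuous_const
  have hint : IntervalIntegrable (fun τ => dist (φ τ t x) xs)
      MeasureTheory.volume t (t + δ) := hcont.intervalIntegrable _ _
  have key : ∀ c : ℝ, c ≠ 0 →
      (∫ τ in t..(t + δ), Real.exp (c * (τ - t))) = (Real.exp (c * δ) - 1) / c := by
    intro c hc
    have hderiv : ∀ τ ∈ Set.uIcc t (t + δ),
        HasDerivAt (fun τ => Real.exp (c * (τ - t)) / c) (Real.exp (c * (τ - t))) τ := by
      intro τ _
      have h1 : HasDerivAt (fun τ : ℝ => c * (τ - t)) c τ := by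
        simpa using ((hasDerivAt_id τ).sub_const t).const_mul c
      have h2 := (h1.exp).div_const c
      simpa [mul_div_cancel_right₀ _ hc] using h2
    rw [intervalIntegral.integral_eq_sub_of_hasDerivAt hderiv
      ((Real.continuous_exp.comp (by continuity)).intervalIntegrable _ _)]
    simp
    ring
  constructor
  · have hmono : (∫ τ in t..(t + δ), Real.exp (-L * (τ - t)) * dist x xs)
        ≤ ∫ τ in t..(t + δ), dist (φ τ t x) xs := by
      apply intervalIntegral.integral_mono_on hle
        (((Real.continuous_exp.comp (by continuity)).mul continuous_const).intervalIntegrable _ _)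
        hint
      intro τ hτ
      exact hlower t τ x hτ.1
    have hcalc : (∫ τ in t..(t + δ), Real.exp (-L * (τ - t)) * dist x xs)
        = ((1 - Real.exp (-L * δ)) / L) * dist x xs := by
      rw [intervalIntegral.integral_mul_const, key (-L) (by linarith)]
      field_simp [hL.ne']
      ring
    linarith [hmono, hcalc ▸ hmono]
  · have hmono : (∫ τ in t..(t + δ), dist (φ τ t x) xs)
        ≤ ∫ τ in t..(t + δ), K * Real.exp (-lam * (τ - t)) * dist x xs := by
      apply intervalIntegral.integral_mono_on hle hint
        (((continuous_const.mul (Real.continuous_exp.comp (by continuity))).mul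
          continuous_const).intervalIntegrable _ _)
      intro τ hτ
      exact hUGES t τ x ht hτ.1
    have hcalc : (∫ τ in t..(t + δ), K * Real.exp (-lam * (τ - t)) * dist x xs)
        = (K * (1 - Real.exp (-lam * δ)) / lam) * dist x xs := by
      have : (fun τ => K * Real.exp (-lam * (τ - t)) * dist x xs)
          = fun τ => Real.exp (-lam * (τ - t)) * (K * dist x xs) := by
        funext τ; ring
      rw [this, intervalIntegral.integral_mul_const, key (-lam) (by linarith)]
      field_simp [hlam.ne']
      ring
    linarith [hcalc ▸ hmono]
end

section
/- (Massera's lemma) Let g : [0,∞) → ℝ be a positive, continuous, strictly decreasing function with g(t) → 0 as t → ∞, and let h : [0,∞) → ℝ be a positive, continuous, nondecreasing function. Then there exists a function G : [0,∞) → ℝ such that: (1) G is continuously differentiable on [0,∞), and both G and its derivative G′ are class 𝒦 functions; and (2) there exist positive constants k₁ and k₂ such that for every continuous function u : [0,∞) → ℝ satisfying 0 ≤ u(t) ≤ g(t) for all t ≥ 0, one has ∫₀^∞ G(u(t)) dt ≤ k₁ and ∫₀^∞ G′(u(t))·h(t) dt ≤ k₂. -/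
open Set MeasureTheory intervalIntegral Real Filter

/-- Integral of a monotone nonneg function: basic facts. -/
lemma massera_aux_int {f : ℝ → ℝ}
    (hint : ∀ a b : ℝ, IntervalIntegrable f MeasureTheory.volume a b)
    (hnn : ∀ s : ℝ, 0 ≤ s → 0 ≤ f s)
    (hpos : ∀ s : ℝ, 0 < s → 0 < f s)
    (hmono : MonotoneOn f (Set.Ici 0)) :
    (∀ a b : ℝ, 0 ≤ a → a ≤ b →
      (∫ s in (0:ℝ)..a, f s) ≤ ∫ s in (0:ℝ)..b, f s) ∧
    (∀ a b : ℝ, 0 ≤ a → a < b →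
      (∫ s in (0:ℝ)..a, f s) < ∫ s in (0:ℝ)..b, f s) ∧
    (∀ r : ℝ, 0 ≤ r → (∫ s in (0:ℝ)..r, f s) ≤ r * f r) ∧
    (∀ r : ℝ, 0 ≤ r → 0 ≤ ∫ s in (0:ℝ)..r, f s) := by
  have key : ∀ a b : ℝ, (∫ s in (0:ℝ)..b, f s) - (∫ s in (0:ℝ)..a, f s)
      = ∫ s in a..b, f s := by
    intro a b
    rw [eq_comm, eq_sub_iff_add_eq, add_comm,
      intervalIntegral.integral_add_adjacent_intervals (hint 0 a) (hint a b)]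
  have hmono' : ∀ a b : ℝ, 0 ≤ a → a ≤ b →
      (∫ s in (0:ℝ)..a, f s) ≤ ∫ s in (0:ℝ)..b, f s := by
    intro a b ha hab
    rw [← sub_nonneg, key]
    exact intervalIntegral.integral_nonneg hab (fun u hu => hnn u (ha.trans hu.1))
  refine ⟨hmono', ?_, ?_, ?_⟩
  · intro a b ha hab
    rw [← sub_pos, key]
    set m := (a + b) / 2 with hm
    have ham : a < m := by simp [hm]; linarith
    have hmb : m < b := by simp [hm]; linarith
    have hmpos : 0 < m := lt_of_le_of_lt ha ham
    have h1 : (∫ s in a..b, f s) = (∫ s in a..m, f s) + ∫ s in m..b, f s := by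
      rw [intervalIntegral.integral_add_adjacent_intervals (hint a m) (hint m b)]
    have h2 : 0 ≤ ∫ s in a..m, f s :=
      intervalIntegral.integral_nonneg ham.le (fun u hu => hnn u (ha.trans hu.1))
    have h3 : (b - m) * f m ≤ ∫ s in m..b, f s := by
      have := intervalIntegral.integral_mono_on (f := fun _ => f m) (g := f) hmb.le
        (intervalIntegrable_const) (hint m b)
        (fun x hx => hmono (le_of_lt hmpos) (hmpos.le.trans hx.1) hx.1)
      simpa using this
    have h4 : 0 < (b - m) * f m := mul_pos (by linarith) (hpos m hmpos)
    linarith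
  · intro r hr
    have := intervalIntegral.integral_mono_on (f := f) (g := fun _ => f r) hr
      (hint 0 r) intervalIntegrable_const
      (fun x hx => hmono hx.1 hr hx.2)
    simpa [mul_comm] using this
  · intro r hr
    exact intervalIntegral.integral_nonneg hr (fun u hu => hnn u hu.1)


noncomputable def mGamma (g : ℝ → ℝ) (r : ℝ) : ℝ := sSup {s : ℝ | 0 ≤ s ∧ r ≤ g s}
noncomputable def mChi (h : ℝ → ℝ) (t : ℝ) : ℝ := Real.exp (-t) / (1 + h t)
noncomputable def mRho (g h : ℝ → ℝ) (r : ℝ) : ℝ :=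
  if 0 < r then mChi h (mGamma g r) else 0

section props
variable {g h : ℝ → ℝ}
  (hgpos : ∀ t, 0 ≤ t → 0 < g t)
  (hgdec : StrictAntiOn g (Set.Ici 0))
  (hglim : Filter.Tendsto g Filter.atTop (nhds 0))
  (hhpos : ∀ t, 0 ≤ t → 0 < h t)
  (hhmono : MonotoneOn h (Set.Ici 0))

include hhpos in
lemma mChi_pos {t : ℝ} (ht : 0 ≤ t) : 0 < mChi h t :=
  div_pos (Real.exp_pos _) (by linarith [hhpos t ht])

include hhpos in
lemma mChi_le_exp {t : ℝ} (ht : 0 ≤ t) : mChi h t ≤ Real.exp (-t) := by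
  rw [mChi, div_le_iff₀ (by linarith [hhpos t ht])]
  nlinarith [Real.exp_pos (-t), hhpos t ht]

include hhpos in
lemma mChi_le_one {t : ℝ} (ht : 0 ≤ t) : mChi h t ≤ 1 :=
  (mChi_le_exp hhpos ht).trans (by
    rw [Real.exp_le_one_iff]; linarith)

include hhpos hhmono in
lemma mChi_anti : AntitoneOn (mChi h) (Set.Ici 0) := by
  intro a ha b hb hab
  have h1 : 0 < 1 + h a := by linarith [hhpos a ha]
  have h2 : 0 < 1 + h b := by linarith [hhpos b hb]
  rw [mChi, mChi, div_le_div_iff₀ h2 h1]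
  have e1 : Real.exp (-b) ≤ Real.exp (-a) := Real.exp_le_exp.2 (by linarith)
  have e2 : h a ≤ h b := hhmono ha hb hab
  nlinarith [Real.exp_pos (-b)]

include hglim in
lemma mGamma_bddAbove {r : ℝ} (hr : 0 < r) : BddAbove {s : ℝ | 0 ≤ s ∧ r ≤ g s} := by
  obtain ⟨T, hT⟩ := (Filter.eventually_atTop).1 (hglim.eventually_lt_const hr)
  exact ⟨T, fun s hs => by
    by_contra hc
    exact absurd hs.2 (not_le.2 (hT s (le_of_not_ge hc)))⟩

include hglim in
lemma mGamma_nonneg {r : ℝ} : 0 ≤ mGamma g r := by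
  rcases le_or_gt r 0 with hr | hr
  · rcases isEmpty_or_nonempty True with _|_  -- dummy
    all_goals {
      by_cases hb : BddAbove {s : ℝ | 0 ≤ s ∧ r ≤ g s}
      · rcases Set.eq_empty_or_nonempty {s : ℝ | 0 ≤ s ∧ r ≤ g s} with he | ⟨s, hs⟩
        · rw [mGamma, he, Real.sSup_empty]
        · exact hs.1.trans (le_csSup hb hs)
      · rw [mGamma, Real.sSup_of_not_bddAbove hb] }
  · rcases Set.eq_empty_or_nonempty {s : ℝ | 0 ≤ s ∧ r ≤ g s} with he | ⟨s, hs⟩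
    · rw [mGamma, he, Real.sSup_empty]
    · exact hs.1.trans (le_csSup (mGamma_bddAbove hglim hr) hs)

include hgdec in
lemma mGamma_g {t : ℝ} (ht : 0 ≤ t) : mGamma g (g t) = t := by
  have hset : {s : ℝ | 0 ≤ s ∧ g t ≤ g s} = Set.Icc 0 t := by
    ext s
    simp only [Set.mem_setOf_eq, Set.mem_Icc, and_congr_right_iff]
    intro hs
    exact ⟨fun hle => by
      by_contra hc
      exact absurd hle (not_le.2 (hgdec ht hs (lt_of_not_ge hc))),
      fun hle => hgdec.antitoneOn hs ht hle⟩
  rw [mGamma, hset, csSup_Icc ht]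

include hglim in
lemma mGamma_anti {r₁ r₂ : ℝ} (h1 : 0 < r₁) (h12 : r₁ ≤ r₂) :
    mGamma g r₂ ≤ mGamma g r₁ := by
  rcases Set.eq_empty_or_nonempty {s : ℝ | 0 ≤ s ∧ r₂ ≤ g s} with he | hne
  · rw [mGamma, he, Real.sSup_empty]
    exact mGamma_nonneg hglim
  · exact csSup_le_csSup (mGamma_bddAbove hglim h1) hne
      (fun s hs => ⟨hs.1, h12.trans hs.2⟩)

include hglim hhpos hhmono in
lemma mRho_mono : Monotone (mRho g h) := by
  intro a b hab
  simp only [mRho]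
  rcases le_or_gt b 0 with hb | hb
  · rw [if_neg (not_lt.2 (hab.trans hb)), if_neg (not_lt.2 hb)]
  · rw [if_pos hb]
    rcases le_or_gt a 0 with ha | ha
    · rw [if_neg (not_lt.2 ha)]
      exact (mChi_pos hhpos (mGamma_nonneg hglim)).le
    · rw [if_pos ha]
      exact mChi_anti hhpos hhmono (mGamma_nonneg hglim) (mGamma_nonneg hglim)
        (mGamma_anti hglim ha hab)

include hglim hhpos in
lemma mRho_nonneg (r : ℝ) : 0 ≤ mRho g h r := by
  rw [mRho]
  split
  · exact (mChi_pos hhpos (mGamma_nonneg hglim)).le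
  · exact le_rfl

include hglim hhpos in
lemma mRho_pos {r : ℝ} (hr : 0 < r) : 0 < mRho g h r := by
  rw [mRho, if_pos hr]
  exact mChi_pos hhpos (mGamma_nonneg hglim)

include hglim hhpos in
lemma mRho_le_one (r : ℝ) : mRho g h r ≤ 1 := by
  rw [mRho]
  split
  · exact mChi_le_one hhpos (mGamma_nonneg hglim)
  · exact zero_le_one

include hgpos hgdec in
lemma mRho_g {t : ℝ} (ht : 0 ≤ t) : mRho g h (g t) = mChi h t := by
  rw [mRho, if_pos (hgpos t ht), mGamma_g hgdec ht]

end props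

noncomputable def mGp (g h : ℝ → ℝ) (r : ℝ) : ℝ := ∫ s in (0:ℝ)..r, mRho g h s
noncomputable def mGG (g h : ℝ → ℝ) (r : ℝ) : ℝ := ∫ s in (0:ℝ)..r, mGp g h s

section props2
variable {g h : ℝ → ℝ}
  (hgpos : ∀ t, 0 ≤ t → 0 < g t)
  (hgdec : StrictAntiOn g (Set.Ici 0))
  (hglim : Filter.Tendsto g Filter.atTop (nhds 0))
  (hhpos : ∀ t, 0 ≤ t → 0 < h t)
  (hhmono : MonotoneOn h (Set.Ici 0))

include hglim hhpos hhmono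

lemma mRho_int : ∀ a b : ℝ, IntervalIntegrable (mRho g h) MeasureTheory.volume a b :=
  fun _ _ => (mRho_mono hglim hhpos hhmono).intervalIntegrable

lemma mGp_props :
    (∀ a b : ℝ, 0 ≤ a → a ≤ b → mGp g h a ≤ mGp g h b) ∧
    (∀ a b : ℝ, 0 ≤ a → a < b → mGp g h a < mGp g h b) ∧
    (∀ r : ℝ, 0 ≤ r → mGp g h r ≤ r * mRho g h r) ∧
    (∀ r : ℝ, 0 ≤ r → 0 ≤ mGp g h r) :=
  massera_aux_int (mRho_int hglim hhpos hhmono)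
    (fun s _ => mRho_nonneg hglim hhpos s)
    (fun s hs => mRho_pos hglim hhpos hs)
    ((mRho_mono hglim hhpos hhmono).monotoneOn _)

lemma mGp_lipschitz : LipschitzWith 1 (mGp g h) := by
  apply LipschitzWith.of_dist_le_mul
  intro x y
  rw [Real.dist_eq, Real.dist_eq, NNReal.coe_one, one_mul]
  have key : mGp g h x - mGp g h y = ∫ s in y..x, mRho g h s := by
    rw [mGp, mGp, eq_comm, eq_sub_iff_add_eq, add_comm,
      intervalIntegral.integral_add_adjacent_intervals
        (mRho_int hglim hhpos hhmono 0 y) (mRho_int hglim hhpos hhmono y x)]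
  rw [key]
  have hb := intervalIntegral.norm_integral_le_of_norm_le_const (C := 1)
    (f := mRho g h) (a := y) (b := x) (by
      intro s _
      rw [Real.norm_eq_abs, abs_le]
      exact ⟨by linarith [mRho_nonneg hglim hhpos s], mRho_le_one hglim hhpos s⟩)
  rw [Real.norm_eq_abs] at hb
  calc |∫ s in y..x, mRho g h s| ≤ 1 * |x - y| := hb
    _ = |x - y| := one_mul _

lemma mGp_cont : Continuous (mGp g h) := (mGp_lipschitz hglim hhpos hhmono).continuous

lemma mGp_int : ∀ a b : ℝ, IntervalIntegrable (mGp g h) MeasureTheory.volume a b :=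
  fun a b => (mGp_cont hglim hhpos hhmono).intervalIntegrable a b

lemma mGG_props :
    (∀ a b : ℝ, 0 ≤ a → a ≤ b → mGG g h a ≤ mGG g h b) ∧
    (∀ a b : ℝ, 0 ≤ a → a < b → mGG g h a < mGG g h b) ∧
    (∀ r : ℝ, 0 ≤ r → mGG g h r ≤ r * mGp g h r) ∧
    (∀ r : ℝ, 0 ≤ r → 0 ≤ mGG g h r) :=
  massera_aux_int (mGp_int hglim hhpos hhmono)
    (fun s hs => (mGp_props hglim hhpos hhmono).2.2.2 s hs)
    (fun s hs => lt_of_lt_of_le (by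
        have := (mGp_props hglim hhpos hhmono).2.1 0 s le_rfl hs
        simpa [mGp] using this)
      le_rfl)
    (fun a ha b hb hab => (mGp_props hglim hhpos hhmono).1 a b ha hab)

lemma mGG_deriv (r : ℝ) : HasDerivAt (mGG g h) (mGp g h r) r := by
  exact intervalIntegral.integral_hasDerivAt_right
    (mGp_int hglim hhpos hhmono 0 r)
    ((mGp_cont hglim hhpos hhmono).stronglyMeasurableAtFilter _ _)
    (mGp_cont hglim hhpos hhmono).continuousAt

lemma mGG_cont : Continuous (mGG g h) := by
  have : Differentiable ℝ (mGG g h) := fun r => (mGG_deriv hglim hhpos hhmono r).differentiableAt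
  exact this.continuous

end props2

/-- Massera's lemma. Given a positive, continuous, strictly
decreasing `g` with `g(t) → 0` at `∞` and a positive, continuous, nondecreasing
`h`, there is a continuously differentiable `G` with `G` and `G′` class 𝒦 and
constants `k₁, k₂ > 0` such that for every continuous `u` with `0 ≤ u ≤ g`,
`∫₀^∞ G(u(t)) dt ≤ k₁` and `∫₀^∞ G′(u(t))·h(t) dt ≤ k₂`. -/
theorem massera_lemma
    (g h : ℝ → ℝ)
    (hgpos : ∀ t, 0 ≤ t → 0 < g t)
    (hgcont : ContinuousOn g (Set.Ici 0))
    (hgdec : StrictAntiOn g (Set.Ici 0))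
    (hglim : Filter.Tendsto g Filter.atTop (nhds 0))
    (hhpos : ∀ t, 0 ≤ t → 0 < h t)
    (hhcont : ContinuousOn h (Set.Ici 0))
    (hhmono : MonotoneOn h (Set.Ici 0)) :
    ∃ G G' : ℝ → ℝ,
      (∀ r, 0 ≤ r → HasDerivWithinAt G (G' r) (Set.Ici 0) r) ∧
      ContinuousOn G' (Set.Ici 0) ∧
      IsClassK G ∧ IsClassK G' ∧
      ∃ k₁ k₂ : ℝ, 0 < k₁ ∧ 0 < k₂ ∧
        ∀ u : ℝ → ℝ, ContinuousOn u (Set.Ici 0) →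
          (∀ t, 0 ≤ t → 0 ≤ u t ∧ u t ≤ g t) →
          (MeasureTheory.IntegrableOn (fun t => G (u t)) (Set.Ioi 0) ∧
            (∫ t in Set.Ioi (0 : ℝ), G (u t)) ≤ k₁) ∧
          (MeasureTheory.IntegrableOn (fun t => G' (u t) * h t) (Set.Ioi 0) ∧
            (∫ t in Set.Ioi (0 : ℝ), G' (u t) * h t) ≤ k₂) := by
  obtain ⟨hGp_mono, hGp_smono, hGp_le, hGp_nn⟩ := mGp_props (g := g) hglim hhpos hhmono
  obtain ⟨hGG_mono, hGG_smono, hGG_le, hGG_nn⟩ := mGG_props (g := g) hglim hhpos hhmono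
  have hGpc : Continuous (mGp g h) := mGp_cont hglim hhpos hhmono
  have hGGc : Continuous (mGG g h) := mGG_cont hglim hhpos hhmono
  have hGp0 : mGp g h 0 = 0 := intervalIntegral.integral_same
  have hGG0 : mGG g h 0 = 0 := intervalIntegral.integral_same
  have hg00 : 0 < g 0 := hgpos 0 le_rfl
  -- dominating function
  have hexp_int : MeasureTheory.IntegrableOn (fun t : ℝ => Real.exp (-t)) (Set.Ioi 0) := by
    have := exp_neg_integrableOn_Ioi (0 : ℝ) (one_pos)
    simpa using this
  -- pointwise bounds
  have hchi_exp : ∀ t : ℝ, 0 ≤ t → mChi h t ≤ Real.exp (-t) := fun t ht => mChi_le_exp hhpos ht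
  have hchih : ∀ t : ℝ, 0 ≤ t → mChi h t * h t ≤ Real.exp (-t) := by
    intro t ht
    have h1 : 0 < 1 + h t := by linarith [hhpos t ht]
    rw [mChi, div_mul_eq_mul_div, div_le_iff₀ h1]
    nlinarith [Real.exp_pos (-t), hhpos t ht]
  have hgle : ∀ t : ℝ, 0 ≤ t → g t ≤ g 0 :=
    fun t ht => hgdec.antitoneOn (self_mem_Ici) ht ht
  refine ⟨mGG g h, mGp g h, fun r _ => (mGG_deriv hglim hhpos hhmono r).hasDerivWithinAt,
    hGpc.continuousOn,
    ⟨hGGc.continuousOn, fun a ha b hb hab => hGG_smono a b ha hab, hGG0, fun r hr => hGG_nn r hr⟩,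
    ⟨hGpc.continuousOn, fun a ha b hb hab => hGp_smono a b ha hab, hGp0, fun r hr => hGp_nn r hr⟩,
    g 0 * g 0, g 0, mul_pos hg00 hg00, hg00, ?_⟩
  intro u hucont hub
  have humeas : ∀ F : ℝ → ℝ, Continuous F →
      MeasureTheory.AEStronglyMeasurable (fun t => F (u t))
        (MeasureTheory.volume.restrict (Set.Ioi (0:ℝ))) := by
    intro F hF
    exact ((hF.comp_continuousOn (hucont.mono Set.Ioi_subset_Ici_self)).aestronglyMeasurable
      measurableSet_Ioi)
  -- bounds for t > 0
  have bound1 : ∀ t : ℝ, t ∈ Set.Ioi (0:ℝ) →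
      mGG g h (u t) ≤ g 0 * g 0 * Real.exp (-t) ∧ 0 ≤ mGG g h (u t) := by
    intro t ht
    have ht0 : (0:ℝ) ≤ t := (le_of_lt ht)
    obtain ⟨hu0, hug⟩ := hub t ht0
    have hgt : 0 < g t := hgpos t ht0
    have h1 : mGG g h (u t) ≤ mGG g h (g t) := hGG_mono (u t) (g t) hu0 hug
    have h2 : mGG g h (g t) ≤ g t * mGp g h (g t) := hGG_le (g t) hgt.le
    have h3 : mGp g h (g t) ≤ g t * mRho g h (g t) := hGp_le (g t) hgt.le
    have h4 : mRho g h (g t) = mChi h t := mRho_g hgpos hgdec ht0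
    have h5 : mChi h t ≤ Real.exp (-t) := hchi_exp t ht0
    have h6 : g t ≤ g 0 := hgle t ht0
    have h7 : 0 ≤ mChi h t := (mChi_pos hhpos ht0).le
    rw [h4] at h3
    have s2 : g t * mGp g h (g t) ≤ g t * (g t * mChi h t) :=
      mul_le_mul_of_nonneg_left h3 hgt.le
    have s3 : g t * mChi h t ≤ g 0 * Real.exp (-t) :=
      mul_le_mul h6 h5 h7 hg00.le
    have s4 : g t * (g t * mChi h t) ≤ g 0 * (g 0 * Real.exp (-t)) :=
      mul_le_mul h6 s3 (mul_nonneg hgt.le h7) hg00.le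
    constructor
    · calc mGG g h (u t) ≤ g t * (g t * mChi h t) := by linarith
        _ ≤ g 0 * (g 0 * Real.exp (-t)) := s4
        _ = g 0 * g 0 * Real.exp (-t) := by ring
    · exact hGG_nn (u t) hu0
  have bound2 : ∀ t : ℝ, t ∈ Set.Ioi (0:ℝ) →
      mGp g h (u t) * h t ≤ g 0 * Real.exp (-t) ∧ 0 ≤ mGp g h (u t) * h t := by
    intro t ht
    have ht0 : (0:ℝ) ≤ t := (le_of_lt ht)
    obtain ⟨hu0, hug⟩ := hub t ht0
    have hgt : 0 < g t := hgpos t ht0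
    have h1 : mGp g h (u t) ≤ mGp g h (g t) := hGp_mono (u t) (g t) hu0 hug
    have h3 : mGp g h (g t) ≤ g t * mRho g h (g t) := hGp_le (g t) hgt.le
    have h4 : mRho g h (g t) = mChi h t := mRho_g hgpos hgdec ht0
    have h5 : mChi h t * h t ≤ Real.exp (-t) := hchih t ht0
    have h6 : g t ≤ g 0 := hgle t ht0
    have h7 : 0 ≤ mChi h t := (mChi_pos hhpos ht0).le
    have hht : 0 < h t := hhpos t ht0
    rw [h4] at h3
    constructor
    · calc mGp g h (u t) * h t ≤ (g t * mChi h t) * h t :=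
            mul_le_mul_of_nonneg_right (h1.trans h3) hht.le
        _ = g t * (mChi h t * h t) := by ring
        _ ≤ g t * Real.exp (-t) := mul_le_mul_of_nonneg_left h5 hgt.le
        _ ≤ g 0 * Real.exp (-t) :=
            mul_le_mul_of_nonneg_right h6 (Real.exp_pos _).le
    · exact mul_nonneg (hGp_nn (u t) hu0) hht.le
  have hdom1 : MeasureTheory.IntegrableOn
      (fun t : ℝ => g 0 * g 0 * Real.exp (-t)) (Set.Ioi 0) := hexp_int.const_mul _
  have hdom2 : MeasureTheory.IntegrableOn
      (fun t : ℝ => g 0 * Real.exp (-t)) (Set.Ioi 0) := hexp_int.const_mul _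
  have hint1 : MeasureTheory.IntegrableOn (fun t => mGG g h (u t)) (Set.Ioi 0) := by
    apply MeasureTheory.Integrable.mono' hdom1 (humeas _ hGGc)
    filter_upwards [MeasureTheory.ae_restrict_mem measurableSet_Ioi] with t ht
    rw [Real.norm_eq_abs, abs_of_nonneg (bound1 t ht).2]
    exact (bound1 t ht).1
  have hint2 : MeasureTheory.IntegrableOn (fun t => mGp g h (u t) * h t) (Set.Ioi 0) := by
    apply MeasureTheory.Integrable.mono' hdom2
    · exact (humeas _ hGpc).mul
        ((hhcont.mono Set.Ioi_subset_Ici_self).aestronglyMeasurable measurableSet_Ioi)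
    · filter_upwards [MeasureTheory.ae_restrict_mem measurableSet_Ioi] with t ht
      rw [Real.norm_eq_abs, abs_of_nonneg (bound2 t ht).2]
      exact (bound2 t ht).1
  have hval : (∫ t in Set.Ioi (0:ℝ), Real.exp (-t)) = 1 := integral_exp_neg_Ioi_zero
  refine ⟨⟨hint1, ?_⟩, ⟨hint2, ?_⟩⟩
  · calc (∫ t in Set.Ioi (0:ℝ), mGG g h (u t))
        ≤ ∫ t in Set.Ioi (0:ℝ), g 0 * g 0 * Real.exp (-t) :=
          MeasureTheory.setIntegral_mono_on hint1 hdom1 measurableSet_Ioi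
            (fun t ht => (bound1 t ht).1)
      _ = g 0 * g 0 := by rw [MeasureTheory.integral_const_mul, hval, mul_one]
  · calc (∫ t in Set.Ioi (0:ℝ), mGp g h (u t) * h t)
        ≤ ∫ t in Set.Ioi (0:ℝ), g 0 * Real.exp (-t) :=
          MeasureTheory.setIntegral_mono_on hint2 hdom2 measurableSet_Ioi
            (fun t ht => (bound2 t ht).1)
      _ = g 0 := by rw [MeasureTheory.integral_const_mul, hval, mul_one]
end

section
/- Let (X, d) be a metric space, let φ be a time-varying flow on X with equilibrium point x⋆, and let L > 0. Assume: (i) d(φ(τ; t, x), x⋆) ≥ e^{−L(τ−t)}·d(x, x⋆) for all τ ≥ t and all x ∈ X; (ii) there is a class 𝒦𝓛 function β with d(φ(τ; t, x), x⋆) ≤ β(d(x, x⋆), τ − t) for all τ ≥ t ≥ 0 and all x ∈ X. Let G be a class 𝒦 function such that for every r ≥ 0 the integral α₂(r) := ∫₀^∞ G(β(r, s)) ds is finite. Define V(t, x) = ∫ₜ^∞ G(d(φ(τ; t, x), x⋆)) dτ. Then V(t, x) is finite for every t ≥ 0 and x ∈ X, and G(e^{−L}·d(x, x⋆)) ≤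 V(t, x) ≤ α₂(d(x, x⋆)) for all t ≥ 0 and x ∈ X; in particular, the lower bound r ↦ G(e^{−L}·r) is a class 𝒦 function. -/
/-- the bound part (Item 1) of the converse Lyapunov theorem for
UGAS systems. For `V(t, x) = ∫ₜ^∞ G(d(φ(τ; t, x), x⋆)) dτ` with `G` supplied by
Massera's lemma, `V` is finite and sandwiched: `G(e^{−L}·d(x,x⋆)) ≤ V(t,x) ≤
α₂(d(x,x⋆))` where `α₂(r) = ∫₀^∞ G(β(r, s)) ds`, and the lower bound is
class 𝒦. -/
theorem converse_ugas_bounds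
    {X : Type*} [MetricSpace X]
    (φ : ℝ → ℝ → X → X) (xs : X)
    (hflow : IsFlow φ) (heq : IsEquilibrium φ xs)
    (L : ℝ) (hL : 0 < L)
    (hlower : ∀ t τ x, t ≤ τ →
      Real.exp (-L * (τ - t)) * dist x xs ≤ dist (φ τ t x) xs)
    (β : ℝ → ℝ → ℝ) (hβ : IsClassKL β)
    (hUGAS : ∀ t τ x, 0 ≤ t → t ≤ τ →
      dist (φ τ t x) xs ≤ β (dist x xs) (τ - t))
    (G : ℝ → ℝ) (hG : IsClassK G)
    (hGint : ∀ r, 0 ≤ r →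
      MeasureTheory.IntegrableOn (fun s => G (β r s)) (Set.Ioi 0)) :
    ∀ t x, 0 ≤ t →
      MeasureTheory.IntegrableOn (fun τ => G (dist (φ τ t x) xs)) (Set.Ioi t) ∧
      G (Real.exp (-L) * dist x xs)
        ≤ (∫ τ in Set.Ioi t, G (dist (φ τ t x) xs)) ∧
      (∫ τ in Set.Ioi t, G (dist (φ τ t x) xs))
        ≤ (∫ s in Set.Ioi (0 : ℝ), G (β (dist x xs) s)) ∧
      IsClassK (fun r => G (Real.exp (-L) * r)) := by

  obtain ⟨hinit, hsg, hcont⟩ := hflow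
  obtain ⟨hGc, hGm, hG0, hGnn⟩ := hG
  intro t x ht
  have hr0 : (0:ℝ) ≤ dist x xs := dist_nonneg
  set r := dist x xs with hrdef
  -- continuity of the integrand
  have hdc : Continuous fun τ => dist (φ τ t x) xs :=
    (hcont t x).dist continuous_const
  have hfc : Continuous fun τ => G (dist (φ τ t x) xs) := by
    rw [← continuousOn_univ]
    exact hGc.comp hdc.continuousOn (fun τ _ => Set.mem_Ici.mpr dist_nonneg)
  have hβnn : ∀ s : ℝ, 0 ≤ s → 0 ≤ β r s := fun s hs => (hβ.2.1 s hs).2.2.2 r hr0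
  -- the shifted dominating function is integrable on Ioi t
  have hind : (fun τ => ((Set.Ioi (0:ℝ)).indicator (fun s => G (β r s))) (τ - t))
      = (Set.Ioi t).indicator (fun τ => G (β r (τ - t))) := by
    funext τ
    simp only [Set.indicator_apply, Set.mem_Ioi, sub_pos]
  have hgi : MeasureTheory.Integrable
      ((Set.Ioi (0:ℝ)).indicator (fun s => G (β r s))) := by
    rw [MeasureTheory.integrable_indicator_iff measurableSet_Ioi]
    exact hGint r hr0
  have hshift : MeasureTheory.IntegrableOn (fun τ => G (β r (τ - t))) (Set.Ioi t) := by
    have h2 := hgi.comp_sub_right t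
    rw [hind] at h2
    exact (MeasureTheory.integrable_indicator_iff measurableSet_Ioi).mp h2
  -- pointwise domination on Ioi t
  have hpt : ∀ τ ∈ Set.Ioi t, G (dist (φ τ t x) xs) ≤ G (β r (τ - t)) := by
    intro τ hτ
    have hτ' : t ≤ τ := le_of_lt hτ
    exact hGm.monotoneOn (Set.mem_Ici.mpr dist_nonneg)
      (Set.mem_Ici.mpr (hβnn _ (by simp at hτ; linarith))) (hUGAS t τ x ht hτ')
  -- integrability of the integrand
  have hfint : MeasureTheory.IntegrableOn
      (fun τ => G (dist (φ τ t x) xs)) (Set.Ioi t) := by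
    refine MeasureTheory.Integrable.mono' hshift
      (hfc.aestronglyMeasurable.restrict) ?_
    rw [MeasureTheory.ae_restrict_iff' measurableSet_Ioi]
    filter_upwards with τ hτ
    rw [Real.norm_eq_abs, abs_of_nonneg (hGnn _ dist_nonneg)]
    exact hpt τ hτ
  -- the shifted integral equals the integral over Ioi 0
  have hintshift : (∫ τ in Set.Ioi t, G (β r (τ - t)))
      = ∫ s in Set.Ioi (0:ℝ), G (β r s) := by
    rw [← MeasureTheory.integral_indicator measurableSet_Ioi, ← hind,
      MeasureTheory.integral_sub_right_eq_self
        ((Set.Ioi (0:ℝ)).indicator (fun s => G (β r s))) t,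
      MeasureTheory.integral_indicator measurableSet_Ioi]
  -- upper bound
  have hupper : (∫ τ in Set.Ioi t, G (dist (φ τ t x) xs))
      ≤ ∫ s in Set.Ioi (0:ℝ), G (β r s) := by
    rw [← hintshift]
    exact MeasureTheory.setIntegral_mono_on hfint hshift measurableSet_Ioi hpt
  -- lower bound
  have hLrnn : 0 ≤ Real.exp (-L) * r := mul_nonneg (Real.exp_pos _).le hr0
  have hlow1 : ∀ τ ∈ Set.Ioc t (t + 1),
      G (Real.exp (-L) * r) ≤ G (dist (φ τ t x) xs) := by
    intro τ hτ
    have h1 : Real.exp (-L) ≤ Real.exp (-L * (τ - t)) := by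
      apply Real.exp_le_exp.mpr
      nlinarith [hτ.1, hτ.2]
    have h2 : Real.exp (-L) * r ≤ Real.exp (-L * (τ - t)) * r :=
      mul_le_mul_of_nonneg_right h1 hr0
    exact hGm.monotoneOn (Set.mem_Ici.mpr hLrnn) (Set.mem_Ici.mpr dist_nonneg)
      (h2.trans (hlower t τ x hτ.1.le))
  have hfpos : (0:ℝ → ℝ) ≤ᵐ[MeasureTheory.volume.restrict (Set.Ioi t)]
      fun τ => G (dist (φ τ t x) xs) := by
    filter_upwards with τ
    exact hGnn _ dist_nonneg
  have hmono : (∫ τ in Set.Ioc t (t + 1), G (dist (φ τ t x) xs))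
      ≤ ∫ τ in Set.Ioi t, G (dist (φ τ t x) xs) :=
    MeasureTheory.setIntegral_mono_set hfint hfpos
      (HasSubset.Subset.eventuallyLE Set.Ioc_subset_Ioi_self)
  have hconst : G (Real.exp (-L) * r)
      ≤ ∫ τ in Set.Ioc t (t + 1), G (dist (φ τ t x) xs) := by
    have hci : MeasureTheory.IntegrableOn
        (fun _ : ℝ => G (Real.exp (-L) * r)) (Set.Ioc t (t + 1)) :=
      (MeasureTheory.integrableOn_const_iff (by simp)).mpr (Or.inr (by simp))
    have := MeasureTheory.setIntegral_mono_on hci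
      (hfint.mono_set Set.Ioc_subset_Ioi_self) measurableSet_Ioc hlow1
    simpa using this
  refine ⟨hfint, hconst.trans hmono, hupper, ?_⟩
  -- class K of the lower bound
  have hmul : ∀ s : ℝ, s ∈ Set.Ici (0:ℝ) → Real.exp (-L) * s ∈ Set.Ici (0:ℝ) :=
    fun s hs => Set.mem_Ici.mpr (mul_nonneg (Real.exp_pos _).le hs)
  refine ⟨hGc.comp (continuousOn_const.mul continuousOn_id) hmul, ?_, by simp [hG0],
    fun s hs => hGnn _ (mul_nonneg (Real.exp_pos _).le hs)⟩
  intro a ha b hb hab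
  exact hGm (hmul a ha) (hmul b hb)
    (by exact mul_lt_mul_of_pos_left hab (Real.exp_pos _))
end
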